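/- arXiv:1304.7934 — 3 statements merged into one kernel-verified Lean document; each statement's English description precedes it below -/
import Mathlib

section
/- Under the standing assumption, let (φ, 𝒳) be a Lebesgue extension of φ₀. Then for every X ∈ 𝒳 and every α > 0, lim_{N→∞} φ̂(α|X| · 1_{{|X| > N}}) = lim_{N→∞} φ(α|X| · 1_{{|X| > N}}) = 0. -/
open MeasureTheory Filter Topology
open scoped ENNReal

noncomputable section

namespace MaxLebExt

variable {Ω : Type*} [MeasurableSpace Ω]

/-- Membership in `L^∞(μ)`. -/
def MemLinf (μ : Measure Ω) (X : Ω → ℝ) : Prop :=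
  MemLp X ⊤ μ

/-- Extended-real-valued expectation `𝔼[f] ∈ [-∞,∞]`, defined as the integral of the
positive part minus the integral of the negative part. -/
def eE (μ : Measure Ω) (f : Ω → ℝ) : EReal :=
  ((∫⁻ ω, ENNReal.ofReal (f ω) ∂μ : ℝ≥0∞) : EReal) -
    ((∫⁻ ω, ENNReal.ofReal (-f ω) ∂μ : ℝ≥0∞) : EReal)

/-- The conjugate `φ*(Z) = sup_{X ∈ L^∞} (𝔼[XZ] - φ(X)) ∈ (-∞,∞]` of a function `φ`
defined (at least) on `L^∞`. -/
def conj (μ : Measure Ω) (φ : (Ω → ℝ) → ℝ) (Z : Ω → ℝ) : EReal :=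
  ⨆ X : {X : Ω → ℝ // MemLinf μ X}, (((∫ ω, X.1 ω * Z ω ∂μ) - φ X.1 : ℝ) : EReal)

/-- `Z ∈ dom φ* = {Z ∈ L¹ : φ*(Z) < ∞}`. -/
def MemDom (μ : Measure Ω) (φ : (Ω → ℝ) → ℝ) (Z : Ω → ℝ) : Prop :=
  Integrable Z μ ∧ conj μ φ Z < ⊤

/-- `X ∈ 𝒟₀ = {X ∈ L⁰ : X⁻ Z ∈ L¹ for all Z ∈ dom φ*}`. -/
def MemD0 (μ : Measure Ω) (φ : (Ω → ℝ) → ℝ) (X : Ω → ℝ) : Prop :=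
  AEStronglyMeasurable X μ ∧
    ∀ Z : Ω → ℝ, MemDom μ φ Z → Integrable (fun ω => max (-(X ω)) 0 * Z ω) μ

/-- The canonical extension `φ̂(X) = sup_{Z ∈ dom φ*} (𝔼[XZ] - φ*(Z))`. -/
def hatphi (μ : Measure Ω) (φ : (Ω → ℝ) → ℝ) (X : Ω → ℝ) : EReal :=
  ⨆ Z : {Z : Ω → ℝ // MemDom μ φ Z},
    (eE μ (fun ω => X ω * Z.1 ω) - conj μ φ Z.1)

/-- The truncated tail `α|X| 1_{{|X| > N}}`. -/
def tailFn (X : Ω → ℝ) (α : ℝ) (N : ℕ) : Ω → ℝ :=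
  Set.indicator {ω | (N : ℝ) < |X ω|} fun ω => α * |X ω|

/-- `X ∈ M^φ̂_u`. -/
def MemMu (μ : Measure Ω) (φ : (Ω → ℝ) → ℝ) (X : Ω → ℝ) : Prop :=
  AEStronglyMeasurable X μ ∧
    ∀ α : ℝ, 0 < α →
      Tendsto (fun N : ℕ => hatphi μ φ (tailFn X α N)) atTop (𝓝 (0 : EReal))

/-- `X ∈ M^φ̂` (the Orlicz heart of `φ̂`). -/
def MemM (μ : Measure Ω) (φ : (Ω → ℝ) → ℝ) (X : Ω → ℝ) : Prop :=
  AEStronglyMeasurable X μ ∧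
    ∀ α : ℝ, 0 < α → hatphi μ φ (fun ω => α * |X ω|) < ⊤

/-- A finite monotone convex function on `L^∞`, compatible with a.e. equality. -/
structure IsMCLinf (μ : Measure Ω) (φ : (Ω → ℝ) → ℝ) : Prop where
  congr : ∀ X Y : Ω → ℝ, MemLinf μ X → MemLinf μ Y → X =ᵐ[μ] Y → φ X = φ Y
  mono : ∀ X Y : Ω → ℝ, MemLinf μ X → MemLinf μ Y → X ≤ᵐ[μ] Y → φ X ≤ φ Y
  convex : ∀ X Y : Ω → ℝ, MemLinf μ X → MemLinf μ Y → ∀ t : ℝ, 0 ≤ t → t ≤ 1 →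
    φ (fun ω => t * X ω + (1 - t) * Y ω) ≤ t * φ X + (1 - t) * φ Y

/-- The Lebesgue property on `L^∞`. -/
def LebesgueLinf (μ : Measure Ω) (φ : (Ω → ℝ) → ℝ) : Prop :=
  ∀ (X : ℕ → Ω → ℝ) (X₀ : Ω → ℝ), (∀ n, MemLinf μ (X n)) → MemLinf μ X₀ →
    (∃ C : ℝ, ∀ n, ∀ᵐ ω ∂μ, |X n ω| ≤ C) →
    (∀ᵐ ω ∂μ, Tendsto (fun n => X n ω) atTop (𝓝 (X₀ ω))) →
    Tendsto (fun n => φ (X n)) atTop (𝓝 (φ X₀))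

/-- The Fatou property on `L^∞`. -/
def FatouLinf (μ : Measure Ω) (φ : (Ω → ℝ) → ℝ) : Prop :=
  ∀ (X : ℕ → Ω → ℝ) (X₀ : Ω → ℝ), (∀ n, MemLinf μ (X n)) → MemLinf μ X₀ →
    (∃ C : ℝ, ∀ n, ∀ᵐ ω ∂μ, |X n ω| ≤ C) →
    (∀ᵐ ω ∂μ, Tendsto (fun n => X n ω) atTop (𝓝 (X₀ ω))) →
    φ X₀ ≤ liminf (fun n => φ (X n)) atTop

/-- Standing assumption: `φ₀` is a finite monotone convex function on `L^∞` with the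
Lebesgue property and `φ₀(0) = 0`. -/
structure Standing (μ : Measure Ω) (φ₀ : (Ω → ℝ) → ℝ) : Prop where
  mc : IsMCLinf μ φ₀
  leb : LebesgueLinf μ φ₀
  zero : φ₀ 0 = 0

/-- A solid vector subspace (ideal) of `L⁰`. -/
structure IsSolidSpace (μ : Measure Ω) (S : Set (Ω → ℝ)) : Prop where
  aesm : ∀ X ∈ S, AEStronglyMeasurable X μ
  zero : (0 : Ω → ℝ) ∈ S
  add : ∀ X ∈ S, ∀ Y ∈ S, X + Y ∈ S
  smul : ∀ c : ℝ, ∀ X ∈ S, (fun ω => c * X ω) ∈ S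
  solid : ∀ X : Ω → ℝ, AEStronglyMeasurable X μ → ∀ Y ∈ S,
    (∀ᵐ ω ∂μ, |X ω| ≤ |Y ω|) → X ∈ S

/-- A finite monotone convex function on a solid space `S`. -/
structure IsMCOn (μ : Measure Ω) (S : Set (Ω → ℝ)) (ψ : (Ω → ℝ) → ℝ) : Prop where
  congr : ∀ X ∈ S, ∀ Y ∈ S, X =ᵐ[μ] Y → ψ X = ψ Y
  mono : ∀ X ∈ S, ∀ Y ∈ S, X ≤ᵐ[μ] Y → ψ X ≤ ψ Y
  convex : ∀ X ∈ S, ∀ Y ∈ S, ∀ t : ℝ, 0 ≤ t → t ≤ 1 →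
    ψ (fun ω => t * X ω + (1 - t) * Y ω) ≤ t * ψ X + (1 - t) * ψ Y

/-- The Lebesgue property on a solid space `S`. -/
def LebesgueOn (μ : Measure Ω) (S : Set (Ω → ℝ)) (ψ : (Ω → ℝ) → ℝ) : Prop :=
  ∀ (X : ℕ → Ω → ℝ) (X₀ Y : Ω → ℝ), (∀ n, X n ∈ S) → X₀ ∈ S → Y ∈ S →
    (∀ n, ∀ᵐ ω ∂μ, |X n ω| ≤ Y ω) →
    (∀ᵐ ω ∂μ, Tendsto (fun n => X n ω) atTop (𝓝 (X₀ ω))) →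
    Tendsto (fun n => ψ (X n)) atTop (𝓝 (ψ X₀))

/-- The Fatou property on a solid space `S`. -/
def FatouOn (μ : Measure Ω) (S : Set (Ω → ℝ)) (ψ : (Ω → ℝ) → ℝ) : Prop :=
  ∀ (X : ℕ → Ω → ℝ) (X₀ Y : Ω → ℝ), (∀ n, X n ∈ S) → X₀ ∈ S → Y ∈ S →
    (∀ n, ∀ᵐ ω ∂μ, |X n ω| ≤ Y ω) →
    (∀ᵐ ω ∂μ, Tendsto (fun n => X n ω) atTop (𝓝 (X₀ ω))) →
    ψ X₀ ≤ liminf (fun n => ψ (X n)) atTop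

/-- A proper monotone convex function with values in `(-∞,∞]` on a solid space `S`. -/
structure IsMCOnE (μ : Measure Ω) (S : Set (Ω → ℝ)) (φ : (Ω → ℝ) → EReal) : Prop where
  congr : ∀ X ∈ S, ∀ Y ∈ S, X =ᵐ[μ] Y → φ X = φ Y
  mono : ∀ X ∈ S, ∀ Y ∈ S, X ≤ᵐ[μ] Y → φ X ≤ φ Y
  convex : ∀ X ∈ S, ∀ Y ∈ S, ∀ t : ℝ, 0 < t → t < 1 →
    φ (fun ω => t * X ω + (1 - t) * Y ω) ≤ (t : EReal) * φ X + ((1 - t : ℝ) : EReal) * φ Y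
  ne_bot : ∀ X ∈ S, φ X ≠ ⊥
  exists_ne_top : ∃ X ∈ S, φ X ≠ ⊤

/-- The Lebesgue property on a solid space `S` for an extended-real-valued function. -/
def LebesgueOnE (μ : Measure Ω) (S : Set (Ω → ℝ)) (φ : (Ω → ℝ) → EReal) : Prop :=
  ∀ (X : ℕ → Ω → ℝ) (X₀ Y : Ω → ℝ), (∀ n, X n ∈ S) → X₀ ∈ S → Y ∈ S →
    (∀ n, ∀ᵐ ω ∂μ, |X n ω| ≤ Y ω) →
    (∀ᵐ ω ∂μ, Tendsto (fun n => X n ω) atTop (𝓝 (X₀ ω))) →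
    Tendsto (fun n => φ (X n)) atTop (𝓝 (φ X₀))

/-- `(φ, S)` is a Lebesgue extension of `(φ₀, L^∞)`. -/
structure IsLebExt (μ : Measure Ω) (φ₀ : (Ω → ℝ) → ℝ)
    (S : Set (Ω → ℝ)) (φ : (Ω → ℝ) → EReal) : Prop where
  solid : IsSolidSpace μ S
  linf_mem : ∀ X : Ω → ℝ, MemLinf μ X → X ∈ S
  mc : IsMCOnE μ S φ
  leb : LebesgueOnE μ S φ
  restrict : ∀ X : Ω → ℝ, MemLinf μ X → φ X = (φ₀ X : EReal)

/-- The gauge (Luxemburg-type) functional `‖X‖_φ̂ = inf {λ > 0 : φ̂(|X|/λ) ≤ 1}`,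
with `inf ∅ = +∞`. -/
def gauge (μ : Measure Ω) (φ : (Ω → ℝ) → ℝ) (X : Ω → ℝ) : EReal :=
  sInf {l : EReal | ∃ r : ℝ, 0 < r ∧ l = (r : EReal) ∧
    hatphi μ φ (fun ω => |X ω| / r) ≤ 1}


/-! ### Auxiliary development -/

section Aux

variable (μ : Measure Ω) [IsProbabilityMeasure μ] (φ₀ : (Ω → ℝ) → ℝ)

/-- `L^∞` as a submodule of `Ω → ℝ`. -/
def Msub : Submodule ℝ (Ω → ℝ) where
  carrier := {X | MemLinf μ X}
  add_mem' hX hY := hX.add hY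
  zero_mem' := MemLp.zero
  smul_mem' c X hX := hX.const_smul c

variable {μ}

lemma memLinf_indicator {A : Set Ω} (hA : MeasurableSet A) :
    MemLinf μ (A.indicator (fun _ => (1:ℝ))) :=
  memLp_top_of_bound (measurable_const.indicator hA).aestronglyMeasurable 1
    (Eventually.of_forall fun ω => by
      by_cases hω : ω ∈ A <;> simp [Set.indicator_apply, hω])

variable {φ₀}

namespace Aux

variable (h : Standing μ φ₀)

/-- slope function -/
def q (φ' : (Ω → ℝ) → ℝ) (f : Ω → ℝ) (t : ℝ) : ℝ := φ' (t • f) / t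

include h

lemma phi_smul_add_smul_le (f g : Ω → ℝ) (hf : MemLinf μ f) (hg : MemLinf μ g)
    (a : ℝ) (ha0 : 0 ≤ a) (ha1 : a ≤ 1) :
    φ₀ (a • f + (1-a) • g) ≤ a * φ₀ f + (1-a) * φ₀ g := by
  have := h.mc.convex f g hf hg a ha0 ha1
  have e : (fun ω => a * f ω + (1 - a) * g ω) = a • f + (1-a) • g := by
    funext ω; simp [Pi.smul_apply, smul_eq_mul]
  rwa [e] at this

lemma q_mono (f : Ω → ℝ) (hf : MemLinf μ f) {s t : ℝ} (hs : 0 < s) (hst : s ≤ t) :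
    q φ₀ f s ≤ q φ₀ f t := by
  have ht : 0 < t := hs.trans_le hst
  have key : φ₀ (s • f) ≤ (s/t) * φ₀ (t • f) := by
    have hmem : MemLinf μ (t • f) := hf.const_smul t
    have h0 : MemLinf μ (0 : Ω → ℝ) := MemLp.zero
    have := phi_smul_add_smul_le h (t • f) 0 hmem h0 (s/t) (by positivity)
      (by rw [div_le_one ht]; exact hst)
    have e : (s/t) • (t • f) + (1 - s/t) • (0 : Ω → ℝ) = s • f := by
      funext ω; simp only [Pi.add_apply, Pi.smul_apply, Pi.zero_apply, smul_eq_mul,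
        mul_zero, add_zero]; field_simp
    rw [e, h.zero] at this
    simpa using this
  rw [q, q, div_le_div_iff₀ hs ht]
  calc φ₀ (s • f) * t ≤ ((s/t) * φ₀ (t • f)) * t := by nlinarith
    _ = φ₀ (t • f) * s := by field_simp

lemma q_ge (f : Ω → ℝ) (hf : MemLinf μ f) {t : ℝ} (ht : 0 < t) (ht1 : t ≤ 1) :
    -φ₀ ((-1 : ℝ) • f) ≤ q φ₀ f t := by
  have hmem : MemLinf μ (t • f) := hf.const_smul t
  have hmemn : MemLinf μ ((-t) • f) := hf.const_smul (-t)
  have h1 : (0:ℝ) ≤ (1/2) * φ₀ (t • f) + (1/2) * φ₀ ((-t) • f) := by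
    have := phi_smul_add_smul_le h (t • f) ((-t) • f) hmem hmemn (1/2) (by norm_num)
      (by norm_num)
    have e : ((1:ℝ)/2) • (t • f) + (1 - (1:ℝ)/2) • ((-t) • f) = (0 : Ω → ℝ) := by
      funext ω
      simp only [Pi.add_apply, Pi.smul_apply, Pi.zero_apply, Pi.neg_apply, smul_eq_mul]
      ring
    rw [e, h.zero] at this
    norm_num at this ⊢
    linarith
  have h2 : φ₀ ((-t) • f) ≤ t * φ₀ ((-1:ℝ) • f) := by
    have hm1 : MemLinf μ ((-1:ℝ) • f) := hf.const_smul (-1)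
    have h0 : MemLinf μ (0 : Ω → ℝ) := MemLp.zero
    have := phi_smul_add_smul_le h ((-1:ℝ) • f) 0 hm1 h0 t ht.le ht1
    have e : t • ((-1:ℝ) • f) + (1 - t) • (0 : Ω → ℝ) = (-t) • f := by
      funext ω
      simp only [Pi.add_apply, Pi.smul_apply, Pi.zero_apply, smul_eq_mul]
      ring
    rw [e, h.zero] at this
    simpa using this
  have : -(t * φ₀ ((-1:ℝ) • f)) ≤ φ₀ (t • f) := by linarith
  rw [q, le_div_iff₀ ht]
  nlinarith



lemma q_lb (f : Ω → ℝ) (hf : MemLinf μ f) {t : ℝ} (ht : 0 < t) :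
    -φ₀ ((-1 : ℝ) • f) ≤ q φ₀ f t := by
  rcases le_or_gt t 1 with h1 | h1
  · exact q_ge h f hf ht h1
  · exact (q_ge h f hf one_pos le_rfl).trans (q_mono h f hf one_pos h1.le)

lemma q_bdd (f : Ω → ℝ) (hf : MemLinf μ f) (a : ℝ) :
    BddBelow (q φ₀ f '' Set.Ioc (0:ℝ) a) := by
  refine ⟨-φ₀ ((-1 : ℝ) • f), ?_⟩
  rintro y ⟨t, ht, rfl⟩
  exact q_lb h f hf ht.1

/-- The sublinear minorant of `φ₀`. -/
def Nfun (φ' : (Ω → ℝ) → ℝ) (f : ↥(Msub μ)) : ℝ := sInf (q φ' f.1 '' Set.Ioc (0:ℝ) 1)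

lemma nfun_eq (f : ↥(Msub μ)) {a : ℝ} (ha : 0 < a) :
    sInf (q φ₀ f.1 '' Set.Ioc (0:ℝ) a) = Nfun φ₀ f := by
  have hf : MemLinf μ f.1 := f.2
  have key : ∀ a b : ℝ, 0 < a → 0 < b →
      sInf (q φ₀ f.1 '' Set.Ioc (0:ℝ) a) ≤ sInf (q φ₀ f.1 '' Set.Ioc (0:ℝ) b) := by
    intro a b ha hb
    refine le_csInf (⟨q φ₀ f.1 b, b, ⟨hb, le_rfl⟩, rfl⟩) ?_
    rintro y ⟨t, ht, rfl⟩
    calc sInf (q φ₀ f.1 '' Set.Ioc (0:ℝ) a)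
        ≤ q φ₀ f.1 (min t a) := csInf_le (q_bdd h f.1 hf a)
          ⟨min t a, ⟨lt_min ht.1 ha, min_le_right _ _⟩, rfl⟩
      _ ≤ q φ₀ f.1 t := q_mono h f.1 hf (lt_min ht.1 ha) (min_le_left _ _)
  exact le_antisymm (key a 1 ha one_pos) (key 1 a one_pos ha)

lemma nfun_le_q (f : ↥(Msub μ)) {t : ℝ} (ht : 0 < t) :
    Nfun φ₀ f ≤ q φ₀ f.1 t := by
  rw [← nfun_eq h f ht]
  exact csInf_le (q_bdd h f.1 f.2 t) ⟨t, ⟨ht, le_rfl⟩, rfl⟩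

lemma nfun_le_phi (f : ↥(Msub μ)) : Nfun φ₀ f ≤ φ₀ f.1 := by
  have := nfun_le_q h f one_pos
  rwa [q, one_smul, div_one] at this

lemma nfun_ge (f : ↥(Msub μ)) : -φ₀ ((-1 : ℝ) • f.1) ≤ Nfun φ₀ f :=
  le_csInf ⟨q φ₀ f.1 1, 1, ⟨one_pos, le_rfl⟩, rfl⟩
    (by rintro y ⟨t, ht, rfl⟩; exact q_lb h f.1 f.2 ht.1)

lemma nfun_hom (c : ℝ) (hc : 0 < c) (f : ↥(Msub μ)) :
    Nfun φ₀ (c • f) = c * Nfun φ₀ f := by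
  have hf : MemLinf μ f.1 := f.2
  have hq : ∀ t : ℝ, 0 < t → q φ₀ (c • f).1 t = c * q φ₀ f.1 (t * c) := by
    intro t ht
    have : (t : ℝ) • (c • f.1) = (t * c) • f.1 := smul_smul t c f.1
    show φ₀ (t • (c • f.1)) / t = c * (φ₀ ((t * c) • f.1) / (t * c))
    rw [this]
    field_simp
  have hA : sInf (q φ₀ f.1 '' Set.Ioc (0:ℝ) c) = Nfun φ₀ f := nfun_eq h f hc
  apply le_antisymm
  · -- Nfun (c•f) ≤ c * Nfun f
    have h1 : Nfun φ₀ (c • f) / c ≤ Nfun φ₀ f := by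
      rw [← hA]
      refine le_csInf (⟨q φ₀ f.1 c, c, ⟨hc, le_rfl⟩, rfl⟩) ?_
      rintro y ⟨s, hs, rfl⟩
      rw [div_le_iff₀ hc, mul_comm]
      calc Nfun φ₀ (c • f) ≤ q φ₀ (c • f).1 (s / c) := nfun_le_q h _ (div_pos hs.1 hc)
        _ = c * q φ₀ f.1 s := by rw [hq (s/c) (div_pos hs.1 hc), div_mul_cancel₀ _ hc.ne']
    rw [div_le_iff₀ hc, mul_comm] at h1
    linarith [h1]
  · -- c * Nfun f ≤ Nfun (c•f)
    refine le_csInf (⟨q φ₀ (c • f).1 1, 1, ⟨one_pos, le_rfl⟩, rfl⟩) ?_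
    rintro y ⟨t, ht, rfl⟩
    rw [hq t ht.1]
    have : Nfun φ₀ f ≤ q φ₀ f.1 (t * c) := nfun_le_q h f (mul_pos ht.1 hc)
    nlinarith
  -- done

lemma nfun_add (f g : ↥(Msub μ)) :
    Nfun φ₀ (f + g) ≤ Nfun φ₀ f + Nfun φ₀ g := by
  have key : ∀ s t : ℝ, s ∈ Set.Ioc (0:ℝ) 1 → t ∈ Set.Ioc (0:ℝ) 1 →
      Nfun φ₀ (f + g) ≤ q φ₀ f.1 s + q φ₀ g.1 t := by
    intro s t hs ht
    set u := min s t with hu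
    have hu0 : 0 < u := lt_min hs.1 ht.1
    have hconv := phi_smul_add_smul_le h (u • f.1) (u • g.1)
      (f.2.const_smul u) (g.2.const_smul u) (1/2) (by norm_num) (by norm_num)
    have e : ((1:ℝ)/2) • (u • f.1) + (1 - (1:ℝ)/2) • (u • g.1) = (u/2) • (f + g).1 := by
      funext ω
      show (1/2) * (u * f.1 ω) + (1 - 1/2) * (u * g.1 ω) = (u/2) * (f.1 ω + g.1 ω)
      ring
    rw [e] at hconv
    have h1 : q φ₀ (f + g).1 (u/2) ≤ q φ₀ f.1 u + q φ₀ g.1 u := by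
      show φ₀ ((u/2) • (f+g).1) / (u/2) ≤ φ₀ (u • f.1)/u + φ₀ (u • g.1)/u
      rw [div_le_iff₀ (by positivity)]
      have : (1:ℝ)/2 * φ₀ (u • f.1) + (1 - 1/2) * φ₀ (u • g.1)
          = (φ₀ (u • f.1)/u + φ₀ (u • g.1)/u) * (u/2) := by
        field_simp; ring
      linarith [hconv, this ▸ hconv]
    calc Nfun φ₀ (f + g) ≤ q φ₀ (f + g).1 (u/2) := nfun_le_q h _ (by positivity)
      _ ≤ q φ₀ f.1 u + q φ₀ g.1 u := h1
      _ ≤ q φ₀ f.1 s + q φ₀ g.1 t :=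
          add_le_add (q_mono h f.1 f.2 hu0 (min_le_left _ _))
            (q_mono h g.1 g.2 hu0 (min_le_right _ _))
  have h2 : ∀ t ∈ Set.Ioc (0:ℝ) 1, Nfun φ₀ (f + g) - Nfun φ₀ f ≤ q φ₀ g.1 t := by
    intro t ht
    have h3 : Nfun φ₀ (f + g) - q φ₀ g.1 t ≤ Nfun φ₀ f := by
      refine le_csInf (⟨q φ₀ f.1 1, 1, ⟨one_pos, le_rfl⟩, rfl⟩) ?_
      rintro y ⟨s, hs, rfl⟩
      linarith [key s t hs ht]
    linarith
  have h4 : Nfun φ₀ (f + g) - Nfun φ₀ f ≤ Nfun φ₀ g := by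
    refine le_csInf (⟨q φ₀ g.1 1, 1, ⟨one_pos, le_rfl⟩, rfl⟩) ?_
    rintro y ⟨t, ht, rfl⟩
    exact h2 t ht
  linarith

lemma nfun_nonpos (f : ↥(Msub μ)) (hf : f.1 ≤ᵐ[μ] 0) : Nfun φ₀ f ≤ 0 := by
  have h1 : φ₀ f.1 ≤ φ₀ 0 := h.mc.mono f.1 0 f.2 MemLp.zero hf
  have := nfun_le_phi h f
  rw [h.zero] at h1
  linarith

lemma nfun_zero : Nfun φ₀ (0 : ↥(Msub μ)) = 0 := by
  apply le_antisymm
  · exact nfun_nonpos h 0 (Eventually.of_forall fun ω => le_rfl)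
  · have := nfun_ge h (0 : ↥(Msub μ))
    have e : ((-1 : ℝ) • (0 : ↥(Msub μ)).1) = (0 : Ω → ℝ) := by
      funext ω; show (-1 : ℝ) * 0 = 0; ring
    rw [e, h.zero] at this
    simpa using this

set_option maxHeartbeats 1000000 in
lemma exists_ell : ∃ ℓ : ↥(Msub μ) →ₗ[ℝ] ℝ, ∀ f, ℓ f ≤ Nfun φ₀ f := by
  obtain ⟨g, -, hg⟩ := exists_extension_of_le_sublinear
    (⟨⊥, 0⟩ : ↥(Msub μ) →ₗ.[ℝ] ℝ) (Nfun φ₀)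
    (fun c hc x => nfun_hom h c hc x)
    (fun x y => nfun_add h x y)
    (by
      rintro ⟨x, hx⟩
      have : x = 0 := by simpa using hx
      subst this
      simp [nfun_zero h])
  exact ⟨g, hg⟩



variable {ℓ : ↥(Msub μ) →ₗ[ℝ] ℝ}

/-- indicator as an element of `L^∞`. -/
def indE (A : Set Ω) (hA : MeasurableSet A) : ↥(Msub μ) :=
  ⟨A.indicator (fun _ => (1:ℝ)), memLinf_indicator (μ := μ) hA⟩

lemma ell_le_phi (hℓ : ∀ f, ℓ f ≤ Nfun φ₀ f) (f : ↥(Msub μ)) : ℓ f ≤ φ₀ f.1 :=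
  (hℓ f).trans (nfun_le_phi h f)

lemma ell_nonpos (hℓ : ∀ f, ℓ f ≤ Nfun φ₀ f) (f : ↥(Msub μ)) (hf : f.1 ≤ᵐ[μ] 0) :
    ℓ f ≤ 0 :=
  (hℓ f).trans (nfun_nonpos h f hf)

lemma ell_nonneg (hℓ : ∀ f, ℓ f ≤ Nfun φ₀ f) (f : ↥(Msub μ)) (hf : 0 ≤ᵐ[μ] f.1) :
    0 ≤ ℓ f := by
  have h1 : ℓ (-f) ≤ 0 := by
    refine ell_nonpos h hℓ (-f) ?_
    filter_upwards [hf] with ω hω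
    simp only [Pi.zero_apply] at hω
    show -f.1 ω ≤ 0
    linarith
  rw [map_neg] at h1
  linarith

lemma ell_indE_nonneg (hℓ : ∀ f, ℓ f ≤ Nfun φ₀ f) (A : Set Ω) (hA : MeasurableSet A) :
    0 ≤ ℓ (indE A hA) := by
  refine ell_nonneg h hℓ _ (Eventually.of_forall fun ω => ?_)
  show 0 ≤ A.indicator (fun _ => (1:ℝ)) ω
  exact Set.indicator_nonneg (fun _ _ => zero_le_one) ω

lemma exists_nu (hℓ : ∀ f, ℓ f ≤ Nfun φ₀ f) :
    ∃ ν : Measure Ω, (∀ A : Set Ω, ∀ hA : MeasurableSet A,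
      ν A = ENNReal.ofReal (ℓ (indE A hA))) ∧ IsFiniteMeasure ν ∧ ν ≪ μ := by
  classical
  have hm0 : ENNReal.ofReal (ℓ (indE (∅ : Set Ω) MeasurableSet.empty)) = 0 := by
    have : indE (∅ : Set Ω) MeasurableSet.empty = (0 : ↥(Msub μ)) := by
      apply Subtype.ext
      show (∅ : Set Ω).indicator (fun _ => (1:ℝ)) = 0
      funext ω; simp
    rw [this, map_zero]
    simp
  have hmU : ∀ g : ℕ → Set Ω, ∀ hg : ∀ i, MeasurableSet (g i),
      Pairwise (Function.onFun Disjoint g) →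
      ENNReal.ofReal (ℓ (indE (⋃ i, g i) (MeasurableSet.iUnion hg)))
        = ∑' i, ENNReal.ofReal (ℓ (indE (g i) (hg i))) := by
    intro g hg hd
    set a : ℕ → ℝ := fun i => ℓ (indE (g i) (hg i)) with ha
    set L : ℝ := ℓ (indE (⋃ i, g i) (MeasurableSet.iUnion hg)) with hL
    have ha0 : ∀ i, 0 ≤ a i := fun i => ell_indE_nonneg h hℓ _ _
    -- tail sets
    set B : ℕ → Set Ω := fun n => ⋃ (i : ℕ) (_ : n ≤ i), g i with hB
    have hBmeas : ∀ n, MeasurableSet (B n) :=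
      fun n => MeasurableSet.iUnion (fun i => MeasurableSet.iUnion (fun _ => hg i))
    -- indicator split
    have hsplit : ∀ n : ℕ,
        L = (∑ i ∈ Finset.range n, a i) + ℓ (indE (B n) (hBmeas n)) := by
      intro n
      have hdisj : ∀ m : ℕ, ∀ A : Set Ω, MeasurableSet A → Disjoint A (g m) →
          (∀ i < m, Disjoint A (g i)) → True := fun _ _ _ _ _ => trivial
      -- first: indE of a union of finitely many plus tail
      have key : ∀ n : ℕ,
          indE (⋃ i, g i) (MeasurableSet.iUnion hg)
            = (∑ i ∈ Finset.range n, indE (g i) (hg i) : ↥(Msub μ)) + indE (B n) (hBmeas n) := by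
        intro n
        apply Subtype.ext
        show (⋃ i, g i).indicator (fun _ => (1:ℝ))
          = ((∑ i ∈ Finset.range n, indE (g i) (hg i) : ↥(Msub μ)) : Ω → ℝ)
            + (B n).indicator (fun _ => (1:ℝ))
        have hcoe : ((∑ i ∈ Finset.range n, indE (g i) (hg i) : ↥(Msub μ)) : Ω → ℝ)
            = ∑ i ∈ Finset.range n, (g i).indicator (fun _ => (1:ℝ)) := by
          induction n with
          | zero => simp
          | succ k ih =>
            rw [Finset.sum_range_succ, Finset.sum_range_succ, Submodule.coe_add, ih]
            rfl
        rw [hcoe]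
        funext ω
        by_cases hω : ∃ i, ω ∈ g i
        · obtain ⟨i₀, hi₀⟩ := hω
          have huniq : ∀ j, ω ∈ g j → j = i₀ := by
            intro j hj
            by_contra hne
            exact (hd hne).le_bot ⟨hj, hi₀⟩
          have hmem : ω ∈ ⋃ i, g i := Set.mem_iUnion.2 ⟨i₀, hi₀⟩
          rw [Set.indicator_of_mem hmem]
          have hsum : (∑ i ∈ Finset.range n, (g i).indicator (fun _ => (1:ℝ)) ω)
              = if i₀ < n then 1 else 0 := by
            by_cases hin : i₀ < n
            · rw [Finset.sum_eq_single i₀]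
              · simp [Set.indicator_of_mem hi₀, hin]
              · intro j hj hne
                have : ω ∉ g j := fun hmem' => hne (huniq j hmem')
                simp [Set.indicator_of_notMem this]
              · intro hni₀
                exact absurd (Finset.mem_range.2 hin) hni₀
            · rw [if_neg hin]
              apply Finset.sum_eq_zero
              intro j hj
              have : ω ∉ g j := by
                intro hmem'
                rw [huniq j hmem'] at hj
                exact hin (Finset.mem_range.1 hj)
              simp [Set.indicator_of_notMem this]
          have hBval : (B n).indicator (fun _ => (1:ℝ)) ω = if i₀ < n then 0 else 1 := by
            by_cases hin : i₀ < n
            · have : ω ∉ B n := by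
                intro hmem'
                obtain ⟨j, hj⟩ := Set.mem_iUnion.1 hmem'
                obtain ⟨hnj, hωj⟩ := Set.mem_iUnion.1 hj
                rw [huniq j hωj] at hnj
                omega
              simp [Set.indicator_of_notMem this, hin]
            · have : ω ∈ B n := Set.mem_iUnion.2 ⟨i₀, Set.mem_iUnion.2 ⟨by omega, hi₀⟩⟩
              simp [Set.indicator_of_mem this, hin]
          rw [Pi.add_apply, Finset.sum_apply, hsum, hBval]
          by_cases hin : i₀ < n <;> simp [hin]
        · push_neg at hω
          have h1 : ω ∉ ⋃ i, g i := by
            intro hmem'; obtain ⟨j, hj⟩ := Set.mem_iUnion.1 hmem'; exact hω j hj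
          have h2 : ω ∉ B n := by
            intro hmem'
            obtain ⟨j, hj⟩ := Set.mem_iUnion.1 hmem'
            obtain ⟨-, hωj⟩ := Set.mem_iUnion.1 hj
            exact hω j hωj
          rw [Set.indicator_of_notMem h1, Pi.add_apply, Set.indicator_of_notMem h2,
            Finset.sum_apply]
          rw [Finset.sum_eq_zero]
          · simp
          · intro j hj
            simp [Set.indicator_of_notMem (hω j)]
      have := congrArg ℓ (key n)
      rw [map_add, map_sum] at this
      exact this
    -- tail terms go to zero
    have htail : Tendsto (fun n => ℓ (indE (B n) (hBmeas n))) atTop (𝓝 0) := by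
      have hub : ∀ n, ℓ (indE (B n) (hBmeas n)) ≤ φ₀ ((B n).indicator (fun _ => (1:ℝ))) :=
        fun n => ell_le_phi h hℓ _
      have hlb : ∀ n, 0 ≤ ℓ (indE (B n) (hBmeas n)) := fun n => ell_indE_nonneg h hℓ _ _
      have hphi : Tendsto (fun n => φ₀ ((B n).indicator (fun _ => (1:ℝ)))) atTop (𝓝 0) := by
        have := h.leb (fun n => (B n).indicator (fun _ => (1:ℝ))) 0
          (fun n => memLinf_indicator (hBmeas n)) MemLp.zero
          ⟨1, fun n => Eventually.of_forall fun ω => by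
            by_cases hω : ω ∈ B n <;> simp [Set.indicator_apply, hω]⟩
          (Eventually.of_forall fun ω => ?_)
        · rwa [h.zero] at this
        · -- pointwise convergence to 0
          rcases Classical.em (∃ i, ω ∈ g i) with ⟨i₀, hi₀⟩ | hω'
          · have : ∀ n, i₀ < n → (B n).indicator (fun _ => (1:ℝ)) ω = 0 := by
              intro n hn
              apply Set.indicator_of_notMem
              intro hmem'
              obtain ⟨j, hj⟩ := Set.mem_iUnion.1 hmem'
              obtain ⟨hnj, hωj⟩ := Set.mem_iUnion.1 hj
              have : j = i₀ := by
                by_contra hne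
                exact (hd hne).le_bot ⟨hωj, hi₀⟩
              omega
            simp only [Pi.zero_apply]
            apply tendsto_atTop_of_eventually_const (i₀ := i₀ + 1)
            intro n hn
            simpa using this n (by omega)
          · push_neg at hω'
            have : ∀ n, (B n).indicator (fun _ => (1:ℝ)) ω = 0 := by
              intro n
              apply Set.indicator_of_notMem
              intro hmem'
              obtain ⟨j, hj⟩ := Set.mem_iUnion.1 hmem'
              obtain ⟨-, hωj⟩ := Set.mem_iUnion.1 hj
              exact hω' j hωj
            simpa [this] using tendsto_const_nhds
      exact tendsto_of_tendsto_of_tendsto_of_le_of_le tendsto_const_nhds hphi hlb hub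
    -- partial sums converge to L
    have hpartial : Tendsto (fun n => ∑ i ∈ Finset.range n, a i) atTop (𝓝 L) := by
      have : (fun n => ∑ i ∈ Finset.range n, a i)
          = fun n => L - ℓ (indE (B n) (hBmeas n)) := by
        funext n; linarith [hsplit n]
      rw [this]
      simpa using tendsto_const_nhds.sub htail
    -- conclude in ℝ≥0∞
    rw [ENNReal.tsum_eq_iSup_nat]
    have hofreal : ∀ n, (∑ i ∈ Finset.range n, ENNReal.ofReal (a i))
        = ENNReal.ofReal (∑ i ∈ Finset.range n, a i) :=
      fun n => (ENNReal.ofReal_sum_of_nonneg (fun i _ => ha0 i)).symm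
    simp_rw [show ∀ n, (∑ i ∈ Finset.range n, ENNReal.ofReal (ℓ (indE (g i) (hg i))))
        = ENNReal.ofReal (∑ i ∈ Finset.range n, a i) from hofreal]
    have hmono : Monotone (fun n => ∑ i ∈ Finset.range n, a i) := by
      intro m n hmn
      exact Finset.sum_le_sum_of_subset_of_nonneg
        (Finset.range_subset_range.2 hmn) (fun i _ _ => ha0 i)
    apply le_antisymm
    · refine le_of_tendsto (ENNReal.tendsto_ofReal hpartial) ?_
      exact Eventually.of_forall fun n => le_iSup
        (fun n => ENNReal.ofReal (∑ i ∈ Finset.range n, a i)) n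
    · exact iSup_le fun n => ENNReal.ofReal_le_ofReal (hmono.ge_of_tendsto hpartial n)
  refine ⟨Measure.ofMeasurable (fun A hA => ENNReal.ofReal (ℓ (indE A hA))) hm0 hmU,
    fun A hA => Measure.ofMeasurable_apply A hA, ?_, ?_⟩
  · constructor
    rw [Measure.ofMeasurable_apply Set.univ MeasurableSet.univ]
    exact ENNReal.ofReal_lt_top
  · refine Measure.AbsolutelyContinuous.mk fun A hA hμA => ?_
    rw [Measure.ofMeasurable_apply A hA]
    have hA0 : (A.indicator (fun _ => (1:ℝ)) : Ω → ℝ) ≤ᵐ[μ] 0 := by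
      have : ∀ᵐ ω ∂μ, ω ∉ A := by
        rw [ae_iff]
        simpa using hμA
      filter_upwards [this] with ω hω
      simp [Set.indicator_of_notMem hω]
    have h1 : ℓ (indE A hA) ≤ 0 := ell_nonpos h hℓ _ hA0
    have h2 : 0 ≤ ℓ (indE A hA) := ell_indE_nonneg h hℓ A hA
    rw [le_antisymm h1 h2]
    simp



lemma simple_memLinf (s : SimpleFunc Ω ℝ) : MemLinf μ ⇑s := by
  obtain ⟨C, hC⟩ := s.exists_forall_norm_le
  exact memLp_top_of_bound s.stronglyMeasurable.aestronglyMeasurable C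
    (Eventually.of_forall hC)

lemma simple_integrable (ν : Measure Ω) (hfin : IsFiniteMeasure ν) (s : SimpleFunc Ω ℝ) :
    Integrable (⇑s) ν := by
  haveI := hfin
  obtain ⟨C, hC⟩ := s.exists_forall_norm_le
  exact (memLp_top_of_bound s.stronglyMeasurable.aestronglyMeasurable C
    (Eventually.of_forall hC)).integrable le_top

lemma integral_simple_eq_ell (hℓ : ∀ f, ℓ f ≤ Nfun φ₀ f)
    (ν : Measure Ω) (hν : ∀ A : Set Ω, ∀ hA : MeasurableSet A,
      ν A = ENNReal.ofReal (ℓ (indE A hA))) (hfin : IsFiniteMeasure ν) :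
    ∀ s : SimpleFunc Ω ℝ, ∀ hs : MemLinf μ ⇑s, ∫ ω, s ω ∂ν = ℓ ⟨⇑s, hs⟩ := by
  haveI := hfin
  apply SimpleFunc.induction
    (motive := fun s : SimpleFunc Ω ℝ => ∀ hs : MemLinf μ ⇑s, ∫ ω, s ω ∂ν = ℓ ⟨⇑s, hs⟩)
  · intro c A hA hs
    have hcoe : ⇑(SimpleFunc.piecewise A hA (SimpleFunc.const Ω c) (SimpleFunc.const Ω 0))
        = A.indicator (fun _ => c) := by
      funext ω
      by_cases hω : ω ∈ A <;>
        simp [SimpleFunc.piecewise_apply, Set.indicator_apply, hω]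
    have h1 : ∫ ω, (SimpleFunc.piecewise A hA (SimpleFunc.const Ω c)
        (SimpleFunc.const Ω 0)) ω ∂ν = (ν A).toReal • c := by
      simp_rw [hcoe]
      exact integral_indicator_const c hA
    have h2 : (⟨⇑(SimpleFunc.piecewise A hA (SimpleFunc.const Ω c) (SimpleFunc.const Ω 0)),
        hs⟩ : ↥(Msub μ)) = c • indE A hA := by
      apply Subtype.ext
      show ⇑(SimpleFunc.piecewise A hA (SimpleFunc.const Ω c) (SimpleFunc.const Ω 0))
        = c • A.indicator (fun _ => (1:ℝ))
      rw [hcoe]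
      funext ω
      by_cases hω : ω ∈ A <;> simp [Set.indicator_apply, hω]
    rw [h1, h2, ℓ.map_smul]
    rw [hν A hA, ENNReal.toReal_ofReal (ell_indE_nonneg h hℓ A hA)]
    simp [smul_eq_mul, mul_comm]
  · intro f g hdisj hf hg hs
    have hfm : MemLinf μ ⇑f := simple_memLinf h f
    have hgm : MemLinf μ ⇑g := simple_memLinf h g
    have hcoe : ⇑(f + g) = ⇑f + ⇑g := by ext ω; simp
    have hsum : (⟨⇑(f + g), hs⟩ : ↥(Msub μ)) = ⟨⇑f, hfm⟩ + ⟨⇑g, hgm⟩ := by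
      apply Subtype.ext
      exact hcoe
    rw [hsum, map_add, ← hf hfm, ← hg hgm]
    have : ∫ ω, (f + g) ω ∂ν = ∫ ω, (f ω + g ω) ∂ν := rfl
    rw [this, integral_add (simple_integrable h ν hfin f) (simple_integrable h ν hfin g)]

lemma integral_le_phi (hℓ : ∀ f, ℓ f ≤ Nfun φ₀ f)
    (ν : Measure Ω) (hν : ∀ A : Set Ω, ∀ hA : MeasurableSet A,
      ν A = ENNReal.ofReal (ℓ (indE A hA))) (hfin : IsFiniteMeasure ν) (hac : ν ≪ μ)
    (X : Ω → ℝ) (hX : MemLinf μ X) : ∫ ω, X ω ∂ν ≤ φ₀ X := by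
  haveI := hfin
  -- measurable representative
  set X' := hX.1.mk X with hX'def
  have hX'sm : StronglyMeasurable X' := hX.1.stronglyMeasurable_mk
  have hXX' : X =ᵐ[μ] X' := hX.1.ae_eq_mk
  have hX'mem : MemLinf μ X' := hX.ae_eq hXX'
  -- a.e. bound
  obtain ⟨C, hC⟩ : ∃ C : ℝ, ∀ᵐ ω ∂μ, ‖X ω‖ ≤ C := by
    refine ⟨(eLpNormEssSup X μ).toReal, ?_⟩
    have hlt : eLpNormEssSup X μ < ⊤ := by
      have := hX.2
      rwa [eLpNorm_exponent_top] at this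
    filter_upwards [ae_le_eLpNormEssSup (f := X) (μ := μ)] with ω hω
    have : (‖X ω‖₊ : ℝ≥0∞) ≤ eLpNormEssSup X μ := hω
    calc ‖X ω‖ = ((‖X ω‖₊ : ℝ≥0∞)).toReal := by simp
      _ ≤ (eLpNormEssSup X μ).toReal := ENNReal.toReal_mono hlt.ne this
  have hC' : ∀ᵐ ω ∂μ, ‖X' ω‖ ≤ C := by
    filter_upwards [hC, hXX'] with ω h1 h2
    rwa [← h2]
  -- simple approximations
  set s : ℕ → SimpleFunc Ω ℝ := fun n =>
    SimpleFunc.approxOn X' hX'sm.measurable Set.univ 0 (Set.mem_univ 0) n with hsdef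
  have hs_tendsto : ∀ ω, Tendsto (fun n => s n ω) atTop (𝓝 (X' ω)) := fun ω =>
    SimpleFunc.tendsto_approxOn hX'sm.measurable (Set.mem_univ 0)
      (by rw [closure_univ]; exact Set.mem_univ _)
  have hs_bound : ∀ n ω, ‖s n ω‖ ≤ ‖X' ω‖ + ‖X' ω‖ := fun n ω =>
    SimpleFunc.norm_approxOn_zero_le hX'sm.measurable (Set.mem_univ 0) ω n
  -- integrals converge
  have hint : Tendsto (fun n => ∫ ω, s n ω ∂ν) atTop (𝓝 (∫ ω, X' ω ∂ν)) := by
    refine tendsto_integral_of_dominated_convergence (fun _ => C + C) ?_ ?_ ?_ ?_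
    · exact fun n => (s n).stronglyMeasurable.aestronglyMeasurable
    · exact integrable_const _
    · intro n
      filter_upwards [hac.ae_le hC'] with ω hω
      calc ‖s n ω‖ ≤ ‖X' ω‖ + ‖X' ω‖ := hs_bound n ω
        _ ≤ C + C := by linarith
    · exact Eventually.of_forall hs_tendsto
  -- φ₀ converges
  have hphi : Tendsto (fun n => φ₀ ⇑(s n)) atTop (𝓝 (φ₀ X')) := by
    refine h.leb (fun n => ⇑(s n)) X' (fun n => simple_memLinf h (s n)) hX'mem
      ⟨C + C, fun n => ?_⟩ (Eventually.of_forall hs_tendsto)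
    filter_upwards [hC'] with ω hω
    calc |s n ω| ≤ ‖X' ω‖ + ‖X' ω‖ := hs_bound n ω
      _ ≤ C + C := by linarith
  -- compare
  have hle : ∀ n, ∫ ω, s n ω ∂ν ≤ φ₀ ⇑(s n) := by
    intro n
    rw [integral_simple_eq_ell h hℓ ν hν hfin (s n) (simple_memLinf h (s n))]
    exact ell_le_phi h hℓ _
  have hfinal : ∫ ω, X' ω ∂ν ≤ φ₀ X' :=
    le_of_tendsto_of_tendsto' hint hphi hle
  have hXX'ν : X =ᵐ[ν] X' := hac.ae_le hXX'
  rw [integral_congr_ae hXX'ν]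
  rw [h.mc.congr X X' hX hX'mem hXX']
  exact hfinal

lemma conj_nonneg (Z : Ω → ℝ) : 0 ≤ conj μ φ₀ Z := by
  have h0 : MemLinf μ (0 : Ω → ℝ) := MemLp.zero
  have : (((∫ ω, (0 : Ω → ℝ) ω * Z ω ∂μ) - φ₀ (0 : Ω → ℝ) : ℝ) : EReal) ≤ conj μ φ₀ Z :=
    le_iSup (fun X : {X : Ω → ℝ // MemLinf μ X} =>
      (((∫ ω, X.1 ω * Z ω ∂μ) - φ₀ X.1 : ℝ) : EReal)) ⟨0, h0⟩
  refine le_trans ?_ this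
  have : ∫ ω, (0 : Ω → ℝ) ω * Z ω ∂μ = 0 := by simp
  rw [this, h.zero]
  norm_num

lemma exists_good_Z :
    ∃ Z : Ω → ℝ, MemDom μ φ₀ Z ∧ (∀ ω, 0 ≤ Z ω) ∧ conj μ φ₀ Z = 0 := by
  obtain ⟨ℓ', hℓ'⟩ := exists_ell h
  obtain ⟨ν, hν, hfin, hac⟩ := exists_nu h hℓ'
  haveI := hfin
  refine ⟨fun ω => (ν.rnDeriv μ ω).toReal, ⟨Measure.integrable_toReal_rnDeriv, ?_⟩,
    fun ω => ENNReal.toReal_nonneg, ?_⟩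
  · -- conj < ⊤
    have hconj : conj μ φ₀ (fun ω => (ν.rnDeriv μ ω).toReal) ≤ 0 := by
      refine iSup_le fun X => ?_
      have hint : ∫ ω, X.1 ω * (ν.rnDeriv μ ω).toReal ∂μ = ∫ ω, X.1 ω ∂ν := by
        rw [← integral_rnDeriv_smul hac (f := X.1)]
        congr 1
        funext ω
        simp [smul_eq_mul, mul_comm]
      rw [show ((((∫ ω, X.1 ω * (ν.rnDeriv μ ω).toReal ∂μ) - φ₀ X.1 : ℝ)) : EReal)
          = (((∫ ω, X.1 ω ∂ν) - φ₀ X.1 : ℝ) : EReal) by rw [hint]]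
      have := integral_le_phi h hℓ' ν hν hfin hac X.1 X.2
      have hle : (∫ ω, X.1 ω ∂ν) - φ₀ X.1 ≤ 0 := by linarith
      calc (((∫ ω, X.1 ω ∂ν) - φ₀ X.1 : ℝ) : EReal) ≤ ((0 : ℝ) : EReal) :=
        EReal.coe_le_coe_iff.2 hle
        _ = 0 := by norm_num
    exact lt_of_le_of_lt hconj (by norm_num)
  · -- conj = 0
    apply le_antisymm
    · refine iSup_le fun X => ?_
      have hint : ∫ ω, X.1 ω * (ν.rnDeriv μ ω).toReal ∂μ = ∫ ω, X.1 ω ∂ν := by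
        rw [← integral_rnDeriv_smul hac (f := X.1)]
        congr 1
        funext ω
        simp [smul_eq_mul, mul_comm]
      have := integral_le_phi h hℓ' ν hν hfin hac X.1 X.2
      have hle : (∫ ω, X.1 ω * (ν.rnDeriv μ ω).toReal ∂μ) - φ₀ X.1 ≤ 0 := by
        rw [hint]; linarith
      calc (((∫ ω, X.1 ω * (ν.rnDeriv μ ω).toReal ∂μ) - φ₀ X.1 : ℝ) : EReal)
          ≤ ((0 : ℝ) : EReal) := EReal.coe_le_coe_iff.2 hle
        _ = 0 := by norm_num
    · exact conj_nonneg h _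

end Aux

end Aux


section Main

variable {μ : Measure Ω} [IsProbabilityMeasure μ] {φ₀ : (Ω → ℝ) → ℝ}

lemma ennreal_coe_eq {x : ℝ≥0∞} (hx : x ≠ ⊤) :
    ((x : EReal)) = ((x.toReal : ℝ) : EReal) := by
  rw [← EReal.toReal_coe_ennreal (x := x)]
  exact (EReal.coe_toReal (by simpa [EReal.coe_ennreal_eq_top_iff] using hx)
    (EReal.coe_ennreal_ne_bot x)).symm

lemma tailFn_nonneg (X : Ω → ℝ) {α : ℝ} (hα : 0 ≤ α) (N : ℕ) (ω : Ω) :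
    0 ≤ tailFn X α N ω :=
  Set.indicator_nonneg (fun ω _ => mul_nonneg hα (abs_nonneg _)) ω

lemma tailFn_le (X : Ω → ℝ) {α : ℝ} (hα : 0 ≤ α) (N : ℕ) (ω : Ω) :
    tailFn X α N ω ≤ α * |X ω| := by
  unfold tailFn
  by_cases hω : ω ∈ {ω | (N : ℝ) < |X ω|}
  · rw [Set.indicator_of_mem hω]
  · rw [Set.indicator_of_notMem hω]
    exact mul_nonneg hα (abs_nonneg _)

lemma tailFn_aesm {X : Ω → ℝ} (hX : AEStronglyMeasurable X μ) (α : ℝ) (N : ℕ) :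
    AEStronglyMeasurable (tailFn X α N) μ := by
  set X' := hX.mk X with hX'def
  have hXX' : X =ᵐ[μ] X' := hX.ae_eq_mk
  have hmeas : Measurable (tailFn X' α N) := by
    apply Measurable.indicator
    · exact measurable_const.mul (hX.measurable_mk.norm)
    · exact measurableSet_lt measurable_const hX.measurable_mk.norm
  refine AEStronglyMeasurable.congr hmeas.aestronglyMeasurable ?_
  filter_upwards [hXX'] with ω hω
  unfold tailFn
  simp only [Set.indicator_apply, Set.mem_setOf_eq, hω]

lemma tailFn_tendsto (X : Ω → ℝ) (α : ℝ) (ω : Ω) :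
    Tendsto (fun N : ℕ => tailFn X α N ω) atTop (𝓝 0) := by
  apply tendsto_atTop_of_eventually_const (i₀ := ⌈|X ω|⌉₊)
  intro N hN
  apply Set.indicator_of_notMem
  simp only [Set.mem_setOf_eq, not_lt]
  calc |X ω| ≤ (⌈|X ω|⌉₊ : ℝ) := Nat.le_ceil _
    _ ≤ (N : ℝ) := Nat.cast_le.2 hN

variable (h : Standing μ φ₀) {S : Set (Ω → ℝ)} {φ : (Ω → ℝ) → EReal}
  (hext : IsLebExt μ φ₀ S φ)

include h hext

/-- Key upper bound: `φ̂ ≤ φ` on nonnegative elements of `S`. -/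
lemma hatphi_le_phi (Y : Ω → ℝ) (hYS : Y ∈ S) (hY0 : ∀ ω, 0 ≤ Y ω) :
    hatphi μ φ₀ Y ≤ φ Y := by
  refine iSup_le fun Z => ?_
  obtain ⟨Zf, hZ⟩ := Z
  simp only
  set c : EReal := conj μ φ₀ Zf with hc
  have hc0 : 0 ≤ c := Aux.conj_nonneg h Zf
  have hcT : c ≠ ⊤ := hZ.2.ne
  have hcB : c ≠ ⊥ := fun hbot => by simp [hbot] at hc0
  set creal : ℝ := c.toReal with hcreal
  have hceq : (creal : EReal) = c := EReal.coe_toReal hcT hcB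
  set A : ℝ≥0∞ := ∫⁻ ω, ENNReal.ofReal (Y ω * Zf ω) ∂μ with hA
  set B : ℝ≥0∞ := ∫⁻ ω, ENNReal.ofReal (-(Y ω * Zf ω)) ∂μ with hB
  have heE : eE μ (fun ω => Y ω * Zf ω) = (A : EReal) - (B : EReal) := rfl
  by_cases hBtop : B = ⊤
  · rw [heE, hBtop]
    rw [EReal.coe_ennreal_top, EReal.sub_top, EReal.bot_sub]
    exact bot_le
  by_cases hφtop : φ Y = ⊤
  · rw [hφtop]; exact le_top
  have hφbot : φ Y ≠ ⊥ := hext.mc.ne_bot Y hYS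
  -- truncations
  have hYaesm : AEStronglyMeasurable Y μ := hext.solid.aesm Y hYS
  set Ym : ℕ → Ω → ℝ := fun m ω => min (Y ω) m with hYm
  have hYm_aesm : ∀ m : ℕ, AEStronglyMeasurable (Ym m) μ := by
    intro m
    have : AEMeasurable (Ym m) μ := hYaesm.aemeasurable.min aemeasurable_const
    exact this.aestronglyMeasurable
  have hYm_bd : ∀ m : ℕ, ∀ ω, ‖Ym m ω‖ ≤ (m : ℝ) := by
    intro m ω
    rw [Real.norm_eq_abs, abs_of_nonneg (le_min (hY0 ω) (Nat.cast_nonneg m))]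
    exact min_le_right _ _
  have hYm_mem : ∀ m : ℕ, MemLinf μ (Ym m) := fun m =>
    memLp_top_of_bound (hYm_aesm m) m (Eventually.of_forall (hYm_bd m))
  have hZint : Integrable Zf μ := hZ.1
  have hInt : ∀ m : ℕ, Integrable (fun ω => Ym m ω * Zf ω) μ := fun m =>
    hZint.bdd_mul (c := m) (hYm_aesm m) (Eventually.of_forall (hYm_bd m))
  -- conjugate inequality
  have hkey : ∀ m : ℕ, ∫ ω, Ym m ω * Zf ω ∂μ - φ₀ (Ym m) ≤ creal := by
    intro m
    have hle : (((∫ ω, Ym m ω * Zf ω ∂μ) - φ₀ (Ym m) : ℝ) : EReal) ≤ c := by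
      exact le_iSup (fun X : {X : Ω → ℝ // MemLinf μ X} =>
        (((∫ ω, X.1 ω * Zf ω ∂μ) - φ₀ X.1 : ℝ) : EReal)) ⟨Ym m, hYm_mem m⟩
    rw [← hceq] at hle
    exact EReal.coe_le_coe_iff.1 hle
  -- φ₀ (Ym m) ≤ (φ Y).toReal
  have hφm : ∀ m : ℕ, φ₀ (Ym m) ≤ (φ Y).toReal := by
    intro m
    have h1 : φ (Ym m) = ((φ₀ (Ym m) : ℝ) : EReal) := hext.restrict (Ym m) (hYm_mem m)
    have h2 : φ (Ym m) ≤ φ Y := by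
      refine hext.mc.mono (Ym m) (hext.linf_mem _ (hYm_mem m)) Y hYS ?_
      exact Eventually.of_forall fun ω => min_le_left _ _
    rw [h1, ← EReal.coe_toReal hφtop hφbot] at h2
    exact EReal.coe_le_coe_iff.1 h2
  -- monotone approximation of lintegrals
  have hptA : ∀ ω, Monotone (fun m : ℕ => ENNReal.ofReal (Ym m ω * Zf ω)) := by
    intro ω m m' hmm'
    dsimp only
    rcases le_or_gt 0 (Zf ω) with hz | hz
    · exact ENNReal.ofReal_le_ofReal (mul_le_mul_of_nonneg_right
        (min_le_min le_rfl (Nat.cast_le.2 hmm')) hz)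
    · have h1 : Ym m ω * Zf ω ≤ 0 :=
        mul_nonpos_of_nonneg_of_nonpos (le_min (hY0 ω) (Nat.cast_nonneg m)) hz.le
      rw [ENNReal.ofReal_eq_zero.2 h1]
      exact zero_le
  have hsupA : ∀ ω, (⨆ m : ℕ, ENNReal.ofReal (Ym m ω * Zf ω))
      = ENNReal.ofReal (Y ω * Zf ω) := by
    intro ω
    apply le_antisymm
    · refine iSup_le fun m => ?_
      rcases le_or_gt 0 (Zf ω) with hz | hz
      · exact ENNReal.ofReal_le_ofReal (mul_le_mul_of_nonneg_right (min_le_left _ _) hz)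
      · have h1 : Ym m ω * Zf ω ≤ 0 :=
          mul_nonpos_of_nonneg_of_nonpos (le_min (hY0 ω) (Nat.cast_nonneg m)) hz.le
        rw [ENNReal.ofReal_eq_zero.2 h1]
        exact zero_le
    · refine le_iSup_of_le ⌈Y ω⌉₊ ?_
      have : Ym ⌈Y ω⌉₊ ω = Y ω := min_eq_left (Nat.le_ceil _)
      rw [this]
  have hptB : ∀ ω, Monotone (fun m : ℕ => ENNReal.ofReal (-(Ym m ω * Zf ω))) := by
    intro ω m m' hmm'
    dsimp only
    rcases le_or_gt 0 (Zf ω) with hz | hz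
    · have h1 : -(Ym m ω * Zf ω) ≤ 0 := by
        have := mul_nonneg (le_min (hY0 ω) (Nat.cast_nonneg m)) hz
        linarith
      rw [ENNReal.ofReal_eq_zero.2 h1]
      exact zero_le
    · apply ENNReal.ofReal_le_ofReal
      have := mul_le_mul_of_nonneg_right
        (min_le_min (le_refl (Y ω)) (Nat.cast_le.2 hmm')) (neg_nonneg.2 hz.le)
      calc -(Ym m ω * Zf ω) = Ym m ω * (-Zf ω) := by ring
        _ ≤ Ym m' ω * (-Zf ω) := this
        _ = -(Ym m' ω * Zf ω) := by ring
  have hsupB : ∀ ω, (⨆ m : ℕ, ENNReal.ofReal (-(Ym m ω * Zf ω)))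
      = ENNReal.ofReal (-(Y ω * Zf ω)) := by
    intro ω
    apply le_antisymm
    · refine iSup_le fun m => ?_
      rcases le_or_gt 0 (Zf ω) with hz | hz
      · have h1 : -(Ym m ω * Zf ω) ≤ 0 := by
          have := mul_nonneg (le_min (hY0 ω) (Nat.cast_nonneg m)) hz
          linarith
        rw [ENNReal.ofReal_eq_zero.2 h1]
        exact zero_le
      · apply ENNReal.ofReal_le_ofReal
        have := mul_le_mul_of_nonneg_right (min_le_left (Y ω) ((m:ℝ)))
          (neg_nonneg.2 hz.le)
        calc -(Ym m ω * Zf ω) = Ym m ω * (-Zf ω) := by ring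
          _ ≤ Y ω * (-Zf ω) := this
          _ = -(Y ω * Zf ω) := by ring
    · refine le_iSup_of_le ⌈Y ω⌉₊ ?_
      have : Ym ⌈Y ω⌉₊ ω = Y ω := min_eq_left (Nat.le_ceil _)
      rw [this]
  have hZae : AEMeasurable Zf μ := hZint.aemeasurable
  have hmeasA : ∀ m : ℕ, AEMeasurable (fun ω => ENNReal.ofReal (Ym m ω * Zf ω)) μ :=
    fun m => ENNReal.measurable_ofReal.comp_aemeasurable
      (((hYm_aesm m).aemeasurable).mul hZae)
  have hmeasB : ∀ m : ℕ, AEMeasurable (fun ω => ENNReal.ofReal (-(Ym m ω * Zf ω))) μ :=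
    fun m => ENNReal.measurable_ofReal.comp_aemeasurable
      ((((hYm_aesm m).aemeasurable).mul hZae).neg)
  set Am : ℕ → ℝ≥0∞ := fun m => ∫⁻ ω, ENNReal.ofReal (Ym m ω * Zf ω) ∂μ with hAm
  set Bm : ℕ → ℝ≥0∞ := fun m => ∫⁻ ω, ENNReal.ofReal (-(Ym m ω * Zf ω)) ∂μ with hBm
  have hAsup : A = ⨆ m, Am m := by
    rw [hA]
    have : (fun ω => ENNReal.ofReal (Y ω * Zf ω))
        = fun ω => ⨆ m : ℕ, ENNReal.ofReal (Ym m ω * Zf ω) := by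
      funext ω; rw [hsupA ω]
    rw [this]
    exact lintegral_iSup' hmeasA (Eventually.of_forall hptA)
  have hBsup : B = ⨆ m, Bm m := by
    rw [hB]
    have : (fun ω => ENNReal.ofReal (-(Y ω * Zf ω)))
        = fun ω => ⨆ m : ℕ, ENNReal.ofReal (-(Ym m ω * Zf ω)) := by
      funext ω; rw [hsupB ω]
    rw [this]
    exact lintegral_iSup' hmeasB (Eventually.of_forall hptB)
  have hBmle : ∀ m, Bm m ≤ B := fun m => hBsup ▸ le_iSup Bm m
  have hAmtop : ∀ m, Am m ≠ ⊤ := by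
    intro m
    have h1 : Am m ≤ ∫⁻ ω, ‖Ym m ω * Zf ω‖₊ ∂μ := by
      apply lintegral_mono
      intro ω
      exact Real.ofReal_le_enorm _
    exact (h1.trans_lt (hInt m).2).ne
  -- the real inequality
  have hreal : ∀ m, (Am m).toReal ≤ (φ Y).toReal + creal + B.toReal := by
    intro m
    have h1 : ∫ ω, Ym m ω * Zf ω ∂μ = (Am m).toReal - (Bm m).toReal :=
      integral_eq_lintegral_pos_part_sub_lintegral_neg_part (hInt m)
    have h2 := hkey m
    have h3 := hφm m
    have h4 : (Bm m).toReal ≤ B.toReal :=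
      ENNReal.toReal_mono hBtop (hBmle m)
    rw [h1] at h2
    linarith
  have hAle : A ≤ ENNReal.ofReal ((φ Y).toReal + creal + B.toReal) := by
    rw [hAsup]
    refine iSup_le fun m => ?_
    rw [← ENNReal.ofReal_toReal (hAmtop m)]
    exact ENNReal.ofReal_le_ofReal (hreal m)
  have hAtop : A ≠ ⊤ := (hAle.trans_lt ENNReal.ofReal_lt_top).ne
  have hAreal : A.toReal ≤ (φ Y).toReal + creal + B.toReal := by
    have := ENNReal.toReal_mono (ENNReal.ofReal_lt_top).ne hAle
    rw [ENNReal.toReal_ofReal (le_trans ENNReal.toReal_nonneg (hreal 0))] at this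
    exact this
  -- conclude
  rw [heE, ennreal_coe_eq hAtop, ennreal_coe_eq hBtop, ← hceq]
  have e1 : ((A.toReal : ℝ) : EReal) - ((B.toReal : ℝ) : EReal) - ((creal : ℝ) : EReal)
      = ((A.toReal - B.toReal - creal : ℝ) : EReal) := by
    rw [← EReal.coe_sub, ← EReal.coe_sub]
  rw [e1, ← EReal.coe_toReal hφtop hφbot]
  exact EReal.coe_le_coe_iff.2 (by linarith)

/-- Key lower bound: `φ̂ ≥ 0` on nonnegative elements. -/
lemma hatphi_nonneg (Y : Ω → ℝ) (hY0 : ∀ ω, 0 ≤ Y ω) :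
    0 ≤ hatphi μ φ₀ Y := by
  obtain ⟨Z, hZdom, hZ0, hZconj⟩ := Aux.exists_good_Z h
  have hB0 : (∫⁻ ω, ENNReal.ofReal (-(Y ω * Z ω)) ∂μ) = 0 := by
    have : ∀ ω, ENNReal.ofReal (-(Y ω * Z ω)) = 0 := by
      intro ω
      rw [ENNReal.ofReal_eq_zero]
      have := mul_nonneg (hY0 ω) (hZ0 ω)
      linarith
    simp only [this, lintegral_const]
    simp
  have hterm : (0 : EReal) ≤ eE μ (fun ω => Y ω * Z ω) - conj μ φ₀ Z := by
    rw [hZconj, sub_zero]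
    unfold eE
    rw [hB0]
    rw [EReal.coe_ennreal_zero, sub_zero]
    exact EReal.coe_ennreal_nonneg _
  calc (0 : EReal) ≤ eE μ (fun ω => Y ω * Z ω) - conj μ φ₀ Z := hterm
    _ ≤ hatphi μ φ₀ Y := le_iSup (fun Z : {Z : Ω → ℝ // MemDom μ φ₀ Z} =>
        eE μ (fun ω => Y ω * Z.1 ω) - conj μ φ₀ Z.1) ⟨Z, hZdom⟩

end Main

/-- if `(φ, S)` is a Lebesgue extension of `φ₀`, then for every `X ∈ S`
and `α > 0`, both `φ̂(α|X| 1_{{|X|>N}})` and `φ(α|X| 1_{{|X|>N}})` tend to `0` as `N → ∞`. -/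
theorem stmt2 (μ : Measure Ω) [IsProbabilityMeasure μ]
    (φ₀ : (Ω → ℝ) → ℝ) (h : Standing μ φ₀)
    (S : Set (Ω → ℝ)) (φ : (Ω → ℝ) → EReal) (hext : IsLebExt μ φ₀ S φ) :
    ∀ X ∈ S, ∀ α : ℝ, 0 < α →
      Tendsto (fun N : ℕ => hatphi μ φ₀ (tailFn X α N)) atTop (𝓝 (0 : EReal)) ∧
      Tendsto (fun N : ℕ => φ (tailFn X α N)) atTop (𝓝 (0 : EReal)) := by
  intro X hXS α hα
  have hXaesm : AEStronglyMeasurable X μ := hext.solid.aesm X hXS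
  -- the dominating function α|X| ∈ S
  have habsX : (fun ω => |X ω|) ∈ S := by
    refine hext.solid.solid _ ?_ X hXS (Eventually.of_forall fun ω => ?_)
    · have : AEStronglyMeasurable (fun ω => ‖X ω‖) μ := hXaesm.norm
      simpa [Real.norm_eq_abs] using this
    · rw [abs_abs]
  have hY_mem : (fun ω => α * |X ω|) ∈ S := hext.solid.smul α _ habsX
  have htail_mem : ∀ N : ℕ, tailFn X α N ∈ S := by
    intro N
    refine hext.solid.solid _ (tailFn_aesm hXaesm α N) _ hY_mem
      (Eventually.of_forall fun ω => ?_)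
    rw [abs_of_nonneg (tailFn_nonneg X hα.le N ω),
      abs_of_nonneg (mul_nonneg hα.le (abs_nonneg _))]
    exact tailFn_le X hα.le N ω
  -- pointwise convergence & domination
  have hbound : ∀ N : ℕ, ∀ᵐ ω ∂μ, |tailFn X α N ω| ≤ α * |X ω| := by
    intro N
    refine Eventually.of_forall fun ω => ?_
    rw [abs_of_nonneg (tailFn_nonneg X hα.le N ω)]
    exact tailFn_le X hα.le N ω
  have hconv : ∀ᵐ ω ∂μ, Tendsto (fun N : ℕ => tailFn X α N ω) atTop
      (𝓝 ((0 : Ω → ℝ) ω)) := by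
    refine Eventually.of_forall fun ω => ?_
    simpa using tailFn_tendsto X α ω
  -- φ(tail) → φ(0) = 0
  have hzero_mem : (0 : Ω → ℝ) ∈ S := hext.solid.zero
  have hφ0 : φ (0 : Ω → ℝ) = 0 := by
    rw [hext.restrict 0 MemLp.zero, h.zero]
    simp
  have hφtend : Tendsto (fun N : ℕ => φ (tailFn X α N)) atTop (𝓝 (0 : EReal)) := by
    have := hext.leb (fun N => tailFn X α N) 0 (fun ω => α * |X ω|)
      htail_mem hzero_mem hY_mem hbound hconv
    rwa [hφ0] at this
  refine ⟨?_, hφtend⟩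
  -- squeeze for hatphi
  have hlow : ∀ N : ℕ, (0 : EReal) ≤ hatphi μ φ₀ (tailFn X α N) := fun N =>
    hatphi_nonneg h hext _ (tailFn_nonneg X hα.le N)
  have hup : ∀ N : ℕ, hatphi μ φ₀ (tailFn X α N) ≤ φ (tailFn X α N) := fun N =>
    hatphi_le_phi h hext _ (htail_mem N) (tailFn_nonneg X hα.le N)
  exact tendsto_of_tendsto_of_tendsto_of_le_of_le tendsto_const_nhds hφtend hlow hup

end MaxLebExt
end
end

section
/- Let 𝒳 ⊆ L⁰ be a solid space containing the constants and ψ : 𝒳 → ℝ a finite-valued monotone convex function with the Lebesgue property on 𝒳. Then ψ has a σ-additive subgradient at every point: for every X ∈ 𝒳 there exists Z ∈ 𝒳~ₙ such that 𝔼[XZ] − ψ(X) ≥ 𝔼[YZ] − ψ(Y) for all Y ∈ 𝒳. -/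
open MeasureTheory Filter Topology
open scoped ENNReal

noncomputable section

namespace MaxLebExt

variable {Ω : Type*} [MeasurableSpace Ω]

section Stmt7Aux
open Pointwise

variable {μ : Measure Ω} {S : Set (Ω → ℝ)} {ψ : (Ω → ℝ) → ℝ}

/-- The solid space as a submodule. -/
def solidSub (hS : IsSolidSpace μ S) : Submodule ℝ (Ω → ℝ) where
  carrier := S
  zero_mem' := hS.zero
  add_mem' := fun {a b} ha hb => hS.add a ha b hb
  smul_mem' := fun c x hx => hS.smul c x hx

theorem mem_neg' (hS : IsSolidSpace μ S) {Y : Ω → ℝ} (hY : Y ∈ S) :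
    (fun ω => -Y ω) ∈ S := by
  have h := hS.smul (-1) Y hY
  have : (fun ω => (-1 : ℝ) * Y ω) = fun ω => -Y ω := by funext ω; ring
  rwa [this] at h

theorem mem_abs' (hS : IsSolidSpace μ S) {Y : Ω → ℝ} (hY : Y ∈ S) :
    (fun ω => |Y ω|) ∈ S := by
  refine hS.solid _ ?_ Y hY (Filter.Eventually.of_forall fun ω => by simp)
  have h := (hS.aesm Y hY).norm
  simpa [Real.norm_eq_abs] using h

theorem mem_add_smul' (hS : IsSolidSpace μ S) {X Y : Ω → ℝ} (hX : X ∈ S) (hY : Y ∈ S)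
    (t : ℝ) : (fun ω => X ω + t * Y ω) ∈ S :=
  hS.add X hX _ (hS.smul t Y hY)

theorem mem_add' (hS : IsSolidSpace μ S) {X Y : Ω → ℝ} (hX : X ∈ S) (hY : Y ∈ S) :
    (fun ω => X ω + Y ω) ∈ S :=
  hS.add X hX Y hY

/-- Difference quotient of `ψ` at `X` in direction `Y` with step `t`. -/
def qf (ψ : (Ω → ℝ) → ℝ) (X : Ω → ℝ) (t : ℝ) (Y : Ω → ℝ) : ℝ :=
  (ψ (fun ω => X ω + t * Y ω) - ψ X) / t

theorem q_mono (hmc : IsMCOn μ S ψ) {X Y : Ω → ℝ} (hX : X ∈ S) (hY : Y ∈ S)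
    (hS : IsSolidSpace μ S) {s t : ℝ} (hs : 0 < s) (hst : s ≤ t) :
    qf ψ X s Y ≤ qf ψ X t Y := by
  have ht : 0 < t := hs.trans_le hst
  have ha0 : (0:ℝ) ≤ s / t := by positivity
  have ha1 : s / t ≤ 1 := by rw [div_le_one ht]; exact hst
  have h := hmc.convex _ (mem_add_smul' hS hX hY t) X hX (s/t) ha0 ha1
  have harg : (fun ω => (s/t) * (X ω + t * Y ω) + (1 - s/t) * X ω)
      = fun ω => X ω + s * Y ω := by
    funext ω; field_simp; ring
  rw [harg] at h
  have e : t * ((s/t) * (ψ fun ω => X ω + t * Y ω) + (1 - s/t) * ψ X)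
      = s * (ψ fun ω => X ω + t * Y ω) + (t-s) * ψ X := by field_simp
  have h3 : t * (ψ fun ω => X ω + s * Y ω)
      ≤ s * (ψ fun ω => X ω + t * Y ω) + (t-s) * ψ X := by
    rw [← e]; exact mul_le_mul_of_nonneg_left h ht.le
  rw [qf, qf, div_le_div_iff₀ hs ht]
  linarith

theorem q_subadd (hmc : IsMCOn μ S ψ) {X Y W : Ω → ℝ} (hX : X ∈ S) (hY : Y ∈ S)
    (hW : W ∈ S) (hS : IsSolidSpace μ S) {s t : ℝ} (hs : 0 < s) (ht : 0 < t) :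
    qf ψ X (s*t/(s+t)) (fun ω => Y ω + W ω) ≤ qf ψ X s Y + qf ψ X t W := by
  have hst : 0 < s + t := by positivity
  obtain ⟨r, hrdef⟩ : ∃ r : ℝ, r = s*t/(s+t) := ⟨_, rfl⟩
  have hr : 0 < r := by rw [hrdef]; positivity
  have hl0 : (0:ℝ) ≤ t/(s+t) := by positivity
  have hl1 : t/(s+t) ≤ 1 := by rw [div_le_one hst]; linarith
  have h := hmc.convex _ (mem_add_smul' hS hX hY s) _ (mem_add_smul' hS hX hW t)
    (t/(s+t)) hl0 hl1
  have harg : (fun ω => (t/(s+t)) * (X ω + s * Y ω) + (1 - t/(s+t)) * (X ω + t * W ω))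
      = fun ω => X ω + r * (fun ω => Y ω + W ω) ω := by
    funext ω; rw [hrdef]; show _ = X ω + s * t / (s + t) * (Y ω + W ω); field_simp; ring
  rw [harg] at h
  rw [qf, qf, qf, ← hrdef, div_add_div _ _ hs.ne' ht.ne', div_le_div_iff₀ hr (by positivity)]
  set u := ψ fun ω => X ω + s * Y ω with hu
  set v := ψ fun ω => X ω + t * W ω with hv
  set p := ψ fun ω => X ω + r * (fun ω => Y ω + W ω) ω with hp
  set w := ψ X with hw
  have hrr : r * (s+t) = s*t := by rw [hrdef]; field_simp
  have e : (s+t) * ((t/(s+t)) * u + (1 - t/(s+t)) * v) = t*u + s*v := by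
    field_simp
    ring
  have h3 : (s+t) * p ≤ t*u + s*v := by
    rw [← e]; exact mul_le_mul_of_nonneg_left h hst.le
  have h5 : (s*t) * p ≤ r * (t*u + s*v) := by
    calc (s*t) * p = r * ((s+t) * p) := by rw [← hrr]; ring
    _ ≤ r * (t*u + s*v) := mul_le_mul_of_nonneg_left h3 hr.le
  have h6 : (r*(s+t)) * w = (s*t) * w := by rw [hrr]
  ring_nf at h5 h6 ⊢
  linarith

theorem q_symm (hmc : IsMCOn μ S ψ) {X Y : Ω → ℝ} (hX : X ∈ S) (hY : Y ∈ S)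
    (hS : IsSolidSpace μ S) {t : ℝ} (ht : 0 < t) :
    0 ≤ qf ψ X t Y + qf ψ X t (fun ω => -Y ω) := by
  have h := hmc.convex _ (mem_add_smul' hS hX hY t) _
    (mem_add_smul' hS hX (mem_neg' hS hY) t) (1/2) (by norm_num) (by norm_num)
  have harg : (fun ω => (1/2 : ℝ) * (X ω + t * Y ω) + (1 - 1/2) * (X ω + t * (fun ω => -Y ω) ω))
      = X := by
    funext ω; show (1/2 : ℝ) * (X ω + t * Y ω) + (1 - 1/2) * (X ω + t * (-Y ω)) = X ω; ring
  rw [harg] at h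
  set u := ψ fun ω => X ω + t * Y ω with hu
  set v := ψ fun ω => X ω + t * (fun ω => -Y ω) ω with hv
  have h' : ψ X ≤ 1/2 * u + (1 - 1/2) * v := h
  rw [qf, qf, ← add_div, le_div_iff₀ ht]
  rw [← hu, ← hv]
  linarith

theorem q_lb (hmc : IsMCOn μ S ψ) {X Y : Ω → ℝ} (hX : X ∈ S) (hY : Y ∈ S)
    (hS : IsSolidSpace μ S) {t : ℝ} (ht : 0 < t) :
    -(qf ψ X 1 (fun ω => -Y ω)) ≤ qf ψ X t Y := by
  rcases le_total t 1 with h1 | h1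
  · have h2 := q_symm hmc hX hY hS ht
    have h3 := q_mono hmc hX (mem_neg' hS hY) hS ht h1
    linarith
  · have h2 := q_symm hmc hX hY hS one_pos
    have h3 := q_mono hmc hX hY hS one_pos h1
    linarith

/-- Sublinear upper envelope of the difference quotients. -/
def Nf (ψ : (Ω → ℝ) → ℝ) (X : Ω → ℝ) (Y : Ω → ℝ) : ℝ :=
  sInf ((fun t => qf ψ X t Y) '' Set.Ioi 0)

theorem Nf_bddBelow (hmc : IsMCOn μ S ψ) {X Y : Ω → ℝ} (hX : X ∈ S) (hY : Y ∈ S)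
    (hS : IsSolidSpace μ S) :
    BddBelow ((fun t => qf ψ X t Y) '' Set.Ioi 0) := by
  refine ⟨-(qf ψ X 1 (fun ω => -Y ω)), ?_⟩
  rintro r ⟨t, ht, rfl⟩
  exact q_lb hmc hX hY hS ht

theorem Nf_nonempty {X Y : Ω → ℝ} :
    ((fun t => qf ψ X t Y) '' Set.Ioi 0).Nonempty :=
  ⟨_, ⟨1, Set.mem_Ioi.2 one_pos, rfl⟩⟩

theorem Nf_le_q (hmc : IsMCOn μ S ψ) {X Y : Ω → ℝ} (hX : X ∈ S) (hY : Y ∈ S)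
    (hS : IsSolidSpace μ S) {t : ℝ} (ht : 0 < t) :
    Nf ψ X Y ≤ qf ψ X t Y :=
  csInf_le (Nf_bddBelow hmc hX hY hS) ⟨t, Set.mem_Ioi.2 ht, rfl⟩

theorem q_smul {X Y : Ω → ℝ} {c t : ℝ} (hc : 0 < c) (ht : 0 < t) :
    qf ψ X t (fun ω => c * Y ω) = c * qf ψ X (t*c) Y := by
  have harg : (fun ω => X ω + t * (fun ω => c * Y ω) ω) = fun ω => X ω + (t*c) * Y ω := by
    funext ω; show X ω + t * (c * Y ω) = _; ring
  rw [qf, qf, harg]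
  field_simp

theorem Nf_homog (hmc : IsMCOn μ S ψ) {X Y : Ω → ℝ} (hX : X ∈ S) (hY : Y ∈ S)
    (hS : IsSolidSpace μ S) {c : ℝ} (hc : 0 < c) :
    Nf ψ X (fun ω => c * Y ω) = c * Nf ψ X Y := by
  have hset : ((fun t => qf ψ X t (fun ω => c * Y ω)) '' Set.Ioi 0)
      = c • ((fun t => qf ψ X t Y) '' Set.Ioi 0) := by
    ext r
    constructor
    · rintro ⟨t, ht, rfl⟩
      refine ⟨qf ψ X (t*c) Y, ⟨t*c, Set.mem_Ioi.2 (mul_pos (Set.mem_Ioi.1 ht) hc), rfl⟩, ?_⟩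
      show c • qf ψ X (t*c) Y = qf ψ X t (fun ω => c * Y ω)
      rw [smul_eq_mul, ← q_smul hc (Set.mem_Ioi.1 ht)]
    · rintro ⟨x, ⟨u, hu, rfl⟩, rfl⟩
      refine ⟨u/c, Set.mem_Ioi.2 (div_pos (Set.mem_Ioi.1 hu) hc), ?_⟩
      show qf ψ X (u/c) (fun ω => c * Y ω) = c • qf ψ X u Y
      rw [q_smul hc (div_pos (Set.mem_Ioi.1 hu) hc), div_mul_cancel₀ _ hc.ne', smul_eq_mul]
  rw [Nf, hset, Real.sInf_smul_of_nonneg hc.le, smul_eq_mul, Nf]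

theorem Nf_subadd (hmc : IsMCOn μ S ψ) {X Y W : Ω → ℝ} (hX : X ∈ S) (hY : Y ∈ S)
    (hW : W ∈ S) (hS : IsSolidSpace μ S) :
    Nf ψ X (fun ω => Y ω + W ω) ≤ Nf ψ X Y + Nf ψ X W := by
  refine le_of_forall_pos_le_add fun ε hε => ?_
  obtain ⟨a, ⟨sv, hsv, rfl⟩, hlt1⟩ := exists_lt_of_csInf_lt (Nf_nonempty (Y := Y))
    (lt_add_of_pos_right (Nf ψ X Y) (half_pos hε))
  obtain ⟨b, ⟨tv, htv, rfl⟩, hlt2⟩ := exists_lt_of_csInf_lt (Nf_nonempty (Y := W))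
    (lt_add_of_pos_right (Nf ψ X W) (half_pos hε))
  have hsv' : (0:ℝ) < sv := hsv
  have htv' : (0:ℝ) < tv := htv
  have h1 : Nf ψ X (fun ω => Y ω + W ω) ≤ qf ψ X (sv*tv/(sv+tv)) (fun ω => Y ω + W ω) :=
    Nf_le_q hmc hX (mem_add' hS hY hW) hS (by positivity)
  have h2 := q_subadd hmc hX hY hW hS hsv' htv'
  linarith

theorem Nf_zero {X : Ω → ℝ} : Nf ψ X (0 : Ω → ℝ) = 0 := by
  have hq : ∀ t : ℝ, 0 < t → qf ψ X t (0 : Ω → ℝ) = 0 := by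
    intro t ht
    have harg : (fun ω => X ω + t * (0 : Ω → ℝ) ω) = X := by
      funext ω; show X ω + t * 0 = X ω; ring
    rw [qf, harg, sub_self, zero_div]
  have hset : ((fun t => qf ψ X t (0 : Ω → ℝ)) '' Set.Ioi 0) = {0} := by
    ext r
    constructor
    · rintro ⟨t, ht, rfl⟩; exact hq t (Set.mem_Ioi.1 ht)
    · rintro rfl; exact ⟨1, Set.mem_Ioi.2 one_pos, hq 1 one_pos⟩
  rw [Nf, hset, csInf_singleton]

theorem mem_sub' (hS : IsSolidSpace μ S) {W V : Ω → ℝ} (hW : W ∈ S) (hV : V ∈ S) :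
    (fun ω => W ω - V ω) ∈ S := by
  have h := mem_add' hS hW (mem_neg' hS hV)
  have e : (fun ω => W ω - V ω) = (fun ω => W ω + (fun ω => -V ω) ω) := by
    funext ω; show W ω - V ω = W ω + -V ω; ring
  rw [e]; exact h

theorem exists_g (hS : IsSolidSpace μ S) (hmc : IsMCOn μ S ψ) {X : Ω → ℝ} (hX : X ∈ S) :
    ∃ g : ↥(solidSub hS) →ₗ[ℝ] ℝ,
      ∀ (w : ↥(solidSub hS)) {t : ℝ}, 0 < t → g w ≤ qf ψ X t (w : Ω → ℝ) := by
  obtain ⟨g, -, hg⟩ := exists_extension_of_le_sublinear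
    (LinearMap.toPMap (0 : ↥(solidSub hS) →ₗ[ℝ] ℝ) ⊥)
    (fun w => Nf ψ X (w : Ω → ℝ))
    (fun c hc x => Nf_homog hmc hX x.2 hS hc)
    (fun x y => Nf_subadd hmc hX x.2 y.2 hS)
    (by
      intro x
      have hx0 : (x : ↥(solidSub hS)) = 0 := (Submodule.mem_bot ℝ).1 x.2
      have h1 : (LinearMap.toPMap (0 : ↥(solidSub hS) →ₗ[ℝ] ℝ) ⊥) x = 0 := by
        rfl
      rw [h1, hx0]
      show (0:ℝ) ≤ Nf ψ X ((0 : ↥(solidSub hS)) : Ω → ℝ)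
      rw [show ((0 : ↥(solidSub hS)) : Ω → ℝ) = (0 : Ω → ℝ) from rfl, Nf_zero])
  exact ⟨g, fun w t ht => (hg w).trans (Nf_le_q hmc hX w.2 hS ht)⟩

section WithG

variable {X : Ω → ℝ} {hS : IsSolidSpace μ S} {g : ↥(solidSub hS) →ₗ[ℝ] ℝ}

theorem coe_sub_apply (w v : ↥(solidSub hS)) (ω : Ω) :
    ((w - v : ↥(solidSub hS)) : Ω → ℝ) ω = (w : Ω → ℝ) ω - (v : Ω → ℝ) ω := rfl

theorem g_le_one (hgq : ∀ (w : ↥(solidSub hS)) {t : ℝ}, 0 < t → g w ≤ qf ψ X t (w : Ω → ℝ))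
    (w : ↥(solidSub hS)) :
    g w ≤ ψ (fun ω => X ω + (w : Ω → ℝ) ω) - ψ X := by
  have h := hgq w one_pos
  rw [qf, div_one] at h
  have e : (fun ω => X ω + 1 * (w : Ω → ℝ) ω) = (fun ω => X ω + (w : Ω → ℝ) ω) := by
    funext ω; ring
  rwa [e] at h

theorem g_sub_le (hgq : ∀ (w : ↥(solidSub hS)) {t : ℝ}, 0 < t → g w ≤ qf ψ X t (w : Ω → ℝ))
    (w v : ↥(solidSub hS)) :
    g w - g v ≤ ψ (fun ω => X ω + ((w : Ω → ℝ) ω - (v : Ω → ℝ) ω)) - ψ X := by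
  have h := g_le_one hgq (w - v)
  rw [map_sub] at h
  have e : (fun ω => X ω + ((w - v : ↥(solidSub hS)) : Ω → ℝ) ω)
      = (fun ω => X ω + ((w : Ω → ℝ) ω - (v : Ω → ℝ) ω)) := by
    funext ω; rw [coe_sub_apply]
  rwa [e] at h

theorem g_pos (hmc : IsMCOn μ S ψ) (hX : X ∈ S)
    (hgq : ∀ (w : ↥(solidSub hS)) {t : ℝ}, 0 < t → g w ≤ qf ψ X t (w : Ω → ℝ))
    (w : ↥(solidSub hS)) (h0 : ∀ᵐ ω ∂μ, 0 ≤ (w : Ω → ℝ) ω) : 0 ≤ g w := by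
  have h := g_le_one hgq (-w)
  rw [map_neg] at h
  have hmem : (fun ω => X ω + ((-w : ↥(solidSub hS)) : Ω → ℝ) ω) ∈ S :=
    mem_add' hS hX (-w).2
  have hle : ψ (fun ω => X ω + ((-w : ↥(solidSub hS)) : Ω → ℝ) ω) ≤ ψ X := by
    refine hmc.mono _ hmem _ hX ?_
    filter_upwards [h0] with ω hω
    have e : ((-w : ↥(solidSub hS)) : Ω → ℝ) ω = -(w : Ω → ℝ) ω := rfl
    rw [e]; linarith
  linarith

theorem g_mono (hmc : IsMCOn μ S ψ) (hX : X ∈ S)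
    (hgq : ∀ (w : ↥(solidSub hS)) {t : ℝ}, 0 < t → g w ≤ qf ψ X t (w : Ω → ℝ))
    (w v : ↥(solidSub hS)) (h0 : ∀ᵐ ω ∂μ, (v : Ω → ℝ) ω ≤ (w : Ω → ℝ) ω) : g v ≤ g w := by
  have h := g_pos hmc hX hgq (w - v) (by
    filter_upwards [h0] with ω hω
    rw [coe_sub_apply]; linarith)
  rw [map_sub] at h; linarith

theorem g_ae_eq (hmc : IsMCOn μ S ψ) (hX : X ∈ S)
    (hgq : ∀ (w : ↥(solidSub hS)) {t : ℝ}, 0 < t → g w ≤ qf ψ X t (w : Ω → ℝ))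
    (w v : ↥(solidSub hS)) (h0 : (w : Ω → ℝ) =ᵐ[μ] (v : Ω → ℝ)) : g w = g v := by
  refine le_antisymm ?_ ?_
  · exact g_mono hmc hX hgq v w (by filter_upwards [h0] with ω hω; rw [hω])
  · exact g_mono hmc hX hgq w v (by filter_upwards [h0] with ω hω; rw [hω])

theorem g_cont (hmc : IsMCOn μ S ψ) (hL : LebesgueOn μ S ψ) (hX : X ∈ S)
    (hgq : ∀ (w : ↥(solidSub hS)) {t : ℝ}, 0 < t → g w ≤ qf ψ X t (w : Ω → ℝ))
    (Yn : ℕ → ↥(solidSub hS)) (Y : ↥(solidSub hS)) (D : Ω → ℝ) (hD : D ∈ S)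
    (hdom : ∀ n, ∀ᵐ ω ∂μ, |(Yn n : Ω → ℝ) ω| ≤ D ω)
    (hconv : ∀ᵐ ω ∂μ, Tendsto (fun n => (Yn n : Ω → ℝ) ω) atTop (𝓝 ((Y : Ω → ℝ) ω))) :
    Tendsto (fun n => g (Yn n)) atTop (𝓝 (g Y)) := by
  set a : ℕ → ℝ := fun n =>
    ψ (fun ω => X ω + ((Y : Ω → ℝ) ω - (Yn n : Ω → ℝ) ω)) - ψ X with ha_def
  set b : ℕ → ℝ := fun n =>
    ψ (fun ω => X ω + ((Yn n : Ω → ℝ) ω - (Y : Ω → ℝ) ω)) - ψ X with hb_def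
  have hDom : (fun ω => |X ω| + (|(Y : Ω → ℝ) ω| + D ω)) ∈ S :=
    mem_add' hS (mem_abs' hS hX) (mem_add' hS (mem_abs' hS Y.2) hD)
  have hmemA : ∀ n, (fun ω => X ω + ((Y : Ω → ℝ) ω - (Yn n : Ω → ℝ) ω)) ∈ S :=
    fun n => hS.add X hX _ (mem_sub' hS Y.2 (Yn n).2)
  have hmemB : ∀ n, (fun ω => X ω + ((Yn n : Ω → ℝ) ω - (Y : Ω → ℝ) ω)) ∈ S :=
    fun n => hS.add X hX _ (mem_sub' hS (Yn n).2 Y.2)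
  have hYD : ∀ᵐ ω ∂μ, True := Filter.Eventually.of_forall fun _ => trivial
  have ha : Tendsto a atTop (𝓝 0) := by
    have h := hL (fun n => fun ω => X ω + ((Y : Ω → ℝ) ω - (Yn n : Ω → ℝ) ω)) X
      (fun ω => |X ω| + (|(Y : Ω → ℝ) ω| + D ω)) hmemA hX hDom
      (fun n => by
        filter_upwards [hdom n] with ω hω
        have := abs_nonneg ((Y : Ω → ℝ) ω)
        calc |X ω + ((Y : Ω → ℝ) ω - (Yn n : Ω → ℝ) ω)|
            ≤ |X ω| + |(Y : Ω → ℝ) ω - (Yn n : Ω → ℝ) ω| := abs_add_le _ _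
          _ ≤ |X ω| + (|(Y : Ω → ℝ) ω| + |(Yn n : Ω → ℝ) ω|) := by
              have h3 : |(Y : Ω → ℝ) ω - (Yn n : Ω → ℝ) ω|
                  ≤ |(Y : Ω → ℝ) ω| + |(Yn n : Ω → ℝ) ω| := by
                simpa [sub_eq_add_neg] using
                  abs_add_le ((Y : Ω → ℝ) ω) (-(Yn n : Ω → ℝ) ω)
              linarith
          _ ≤ |X ω| + (|(Y : Ω → ℝ) ω| + D ω) := by linarith)
      (by
        filter_upwards [hconv] with ω hω
        have h2 : Tendsto (fun n => X ω + ((Y : Ω → ℝ) ω - (Yn n : Ω → ℝ) ω)) atTop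
            (𝓝 (X ω + ((Y : Ω → ℝ) ω - (Y : Ω → ℝ) ω))) :=
          tendsto_const_nhds.add (tendsto_const_nhds.sub hω)
        simpa using h2)
    have h2 := h.sub_const (ψ X)
    rw [sub_self] at h2
    exact h2
  have hb : Tendsto b atTop (𝓝 0) := by
    have h := hL (fun n => fun ω => X ω + ((Yn n : Ω → ℝ) ω - (Y : Ω → ℝ) ω)) X
      (fun ω => |X ω| + (|(Y : Ω → ℝ) ω| + D ω)) hmemB hX hDom
      (fun n => by
        filter_upwards [hdom n] with ω hω
        calc |X ω + ((Yn n : Ω → ℝ) ω - (Y : Ω → ℝ) ω)|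
            ≤ |X ω| + |(Yn n : Ω → ℝ) ω - (Y : Ω → ℝ) ω| := abs_add_le _ _
          _ ≤ |X ω| + (|(Yn n : Ω → ℝ) ω| + |(Y : Ω → ℝ) ω|) := by
              have h3 : |(Yn n : Ω → ℝ) ω - (Y : Ω → ℝ) ω|
                  ≤ |(Yn n : Ω → ℝ) ω| + |(Y : Ω → ℝ) ω| := by
                simpa [sub_eq_add_neg] using
                  abs_add_le ((Yn n : Ω → ℝ) ω) (-(Y : Ω → ℝ) ω)
              linarith
          _ ≤ |X ω| + (|(Y : Ω → ℝ) ω| + D ω) := by linarith)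
      (by
        filter_upwards [hconv] with ω hω
        have h2 : Tendsto (fun n => X ω + ((Yn n : Ω → ℝ) ω - (Y : Ω → ℝ) ω)) atTop
            (𝓝 (X ω + ((Y : Ω → ℝ) ω - (Y : Ω → ℝ) ω))) :=
          tendsto_const_nhds.add (hω.sub tendsto_const_nhds)
        simpa using h2)
    have h2 := h.sub_const (ψ X)
    rw [sub_self] at h2
    exact h2
  have hlow : ∀ n, g Y - a n ≤ g (Yn n) := fun n => by
    have := g_sub_le hgq Y (Yn n); simp only [ha_def]; linarith
  have hhigh : ∀ n, g (Yn n) ≤ g Y + b n := fun n => by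
    have := g_sub_le hgq (Yn n) Y; simp only [hb_def]; linarith
  have h1 : Tendsto (fun n => g Y - a n) atTop (𝓝 (g Y)) := by
    simpa using tendsto_const_nhds.sub ha
  have h2 : Tendsto (fun n => g Y + b n) atTop (𝓝 (g Y)) := by
    simpa using tendsto_const_nhds.add hb
  exact tendsto_of_tendsto_of_tendsto_of_le_of_le h1 h2 hlow hhigh

theorem mem_indf (hS' : IsSolidSpace μ S) (hconst : ∀ c : ℝ, (fun _ => c) ∈ S)
    {A : Set Ω} (hA : MeasurableSet A) : A.indicator (fun _ => (1:ℝ)) ∈ S := by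
  refine hS'.solid _ (measurable_const.indicator hA).aestronglyMeasurable
    (fun _ => (1:ℝ)) (hconst 1) (Filter.Eventually.of_forall fun ω => ?_)
  by_cases h : ω ∈ A <;> simp [Set.indicator_apply, h]

theorem exists_density [IsProbabilityMeasure μ] (hmc : IsMCOn μ S ψ) (hL : LebesgueOn μ S ψ)
    (hconst : ∀ c : ℝ, (fun _ => c) ∈ S) (hX : X ∈ S)
    (hgq : ∀ (w : ↥(solidSub hS)) {t : ℝ}, 0 < t → g w ≤ qf ψ X t (w : Ω → ℝ)) :
    ∃ Z : Ω → ℝ, Integrable Z μ ∧ (∀ ω, 0 ≤ Z ω) ∧ Measurable Z ∧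
      ∀ (A : Set Ω), MeasurableSet A →
        ∀ (hmem : A.indicator (fun _ => (1:ℝ)) ∈ S),
        ∫ ω, A.indicator (fun _ => (1:ℝ)) ω * Z ω ∂μ
          = g ⟨A.indicator (fun _ => (1:ℝ)), hmem⟩ := by
  classical
  set ι : ∀ A : Set Ω, MeasurableSet A → ↥(solidSub hS) :=
    fun A hA => ⟨A.indicator (fun _ => (1:ℝ)), mem_indf hS hconst hA⟩ with hι
  have hιpos : ∀ A (hA : MeasurableSet A), 0 ≤ g (ι A hA) := fun A hA =>
    g_pos hmc hX hgq _ (Filter.Eventually.of_forall fun ω =>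
      Set.indicator_nonneg (fun _ _ => zero_le_one) ω)
  -- countable additivity of `g` on indicators
  have hcadd : ∀ (f : ℕ → Set Ω) (hf : ∀ i, MeasurableSet (f i)),
      Pairwise (Function.onFun Disjoint f) →
      (Summable fun i => g (ι (f i) (hf i))) ∧
        HasSum (fun i => g (ι (f i) (hf i))) (g (ι (⋃ i, f i) (MeasurableSet.iUnion hf))) := by
    intro f hf hd
    set U : Set Ω := ⋃ i, f i with hU
    have hUm : MeasurableSet U := MeasurableSet.iUnion hf
    set F : ℕ → Set Ω := fun n => ⋃ i ∈ Finset.range n, f i with hF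
    have hFm : ∀ n, MeasurableSet (F n) := fun n =>
      (Finset.range n).measurableSet_biUnion fun i _ => hf i
    have hFU : ∀ n, F n ⊆ U := fun n =>
      Set.iUnion₂_subset fun i _ => Set.subset_iUnion f i
    have hindsum : ∀ n, (∑ i ∈ Finset.range n, (f i).indicator (fun _ => (1:ℝ)))
        = (F n).indicator (fun _ => (1:ℝ)) := by
      intro n
      induction n with
      | zero => funext ω; simp [hF]
      | succ n ih =>
        have hdisj : Disjoint (F n) (f n) := by
          rw [Set.disjoint_left]
          rintro ω hωF hωf
          simp only [hF, Set.mem_iUnion, Finset.mem_range] at hωF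
          obtain ⟨i, hi, hωi⟩ := hωF
          exact Set.disjoint_left.1 (hd (Nat.ne_of_lt hi)) hωi hωf
        have hFn : F (n+1) = F n ∪ f n := by
          simp only [hF]
          rw [Finset.range_add_one, Finset.set_biUnion_insert, Set.union_comm]
        rw [Finset.sum_range_succ, ih, hFn, Set.indicator_union_of_disjoint hdisj]
        rfl
    have hgsum : ∀ n, ∑ i ∈ Finset.range n, g (ι (f i) (hf i)) = g (ι (F n) (hFm n)) := by
      intro n
      rw [← map_sum]
      congr 1
      refine Subtype.ext ?_
      rw [AddSubmonoidClass.coe_finset_sum]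
      exact hindsum n
    set B : ℕ → Set Ω := fun n => U \ F n with hB
    have hBm : ∀ n, MeasurableSet (B n) := fun n => hUm.diff (hFm n)
    have hsplit : ∀ n, g (ι U hUm) = g (ι (F n) (hFm n)) + g (ι (B n) (hBm n)) := by
      intro n
      rw [← map_add]
      congr 1
      refine Subtype.ext ?_
      show U.indicator _ = ((F n).indicator _ + (B n).indicator _ : Ω → ℝ)
      have hUeq : U = F n ∪ B n := (Set.union_diff_cancel (hFU n)).symm
      rw [hUeq, Set.indicator_union_of_disjoint Set.disjoint_sdiff_right]
      rfl
    have htend0 : Tendsto (fun n => g (ι (B n) (hBm n))) atTop (𝓝 0) := by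
      have h := g_cont hmc hL hX hgq (fun n => ι (B n) (hBm n)) 0 (fun _ => (1:ℝ))
        (hconst 1)
        (fun n => Filter.Eventually.of_forall fun ω => by
          by_cases h : ω ∈ B n <;> simp [hι, Set.indicator_apply, h])
        (Filter.Eventually.of_forall fun ω => by
          show Tendsto (fun n => (B n).indicator (fun _ => (1:ℝ)) ω) atTop
            (𝓝 (((0 : ↥(solidSub hS)) : Ω → ℝ) ω))
          have h00 : ((0 : ↥(solidSub hS)) : Ω → ℝ) ω = 0 := rfl
          rw [h00]
          by_cases hωU : ω ∈ U
          · obtain ⟨i, hωi⟩ := Set.mem_iUnion.1 hωU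
            refine tendsto_atTop_of_eventually_const (i₀ := i + 1) fun n hn => ?_
            have hωF : ω ∈ F n := by
              simp only [hF, Set.mem_iUnion, Finset.mem_range]
              exact ⟨i, lt_of_lt_of_le (Nat.lt_succ_self i) hn, hωi⟩
            have : ω ∉ B n := fun hc => hc.2 hωF
            simp [Set.indicator_apply, this]
          · refine tendsto_atTop_of_eventually_const (i₀ := 0) fun n _ => ?_
            have : ω ∉ B n := fun hc => hωU hc.1
            simp [Set.indicator_apply, this])
      rwa [map_zero] at h
    have htendsum : Tendsto (fun n => ∑ i ∈ Finset.range n, g (ι (f i) (hf i))) atTop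
        (𝓝 (g (ι U hUm))) := by
      have he : (fun n => ∑ i ∈ Finset.range n, g (ι (f i) (hf i)))
          = fun n => g (ι U hUm) - g (ι (B n) (hBm n)) := by
        funext n; rw [hgsum n]; linarith [hsplit n]
      rw [he]
      simpa using tendsto_const_nhds.sub htend0
    have hsummable : Summable fun i => g (ι (f i) (hf i)) := by
      refine summable_of_sum_range_le (c := g (ι U hUm)) (fun i => hιpos _ (hf i)) fun n => ?_
      rw [hgsum n]
      have := hιpos (B n) (hBm n)
      linarith [hsplit n]
    exact ⟨hsummable, by
      have h1 := hsummable.hasSum.tendsto_sum_nat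
      have h2 := tendsto_nhds_unique h1 htendsum
      rw [← h2] at *
      exact hsummable.hasSum⟩
  -- the measure
  set ν : Measure Ω := Measure.ofMeasurable
    (fun A hA => ENNReal.ofReal (g (ι A hA)))
    (by
      have h0 : ι ∅ MeasurableSet.empty = 0 := Subtype.ext (by
        show (∅ : Set Ω).indicator _ = (0 : Ω → ℝ)
        funext ω; simp)
      show ENNReal.ofReal (g (ι ∅ MeasurableSet.empty)) = 0
      rw [h0, map_zero, ENNReal.ofReal_zero])
    (by
      intro f hf hd
      obtain ⟨hsummable, hhs⟩ := hcadd f hf hd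
      show ENNReal.ofReal (g (ι (⋃ i, f i) (MeasurableSet.iUnion hf)))
        = ∑' i, ENNReal.ofReal (g (ι (f i) (hf i)))
      rw [← hhs.tsum_eq, ENNReal.ofReal_tsum_of_nonneg (fun i => hιpos _ (hf i)) hsummable])
    with hν
  have hνapply : ∀ (A : Set Ω) (hA : MeasurableSet A),
      ν A = ENNReal.ofReal (g (ι A hA)) := fun A hA =>
    Measure.ofMeasurable_apply A hA
  haveI : IsFiniteMeasure ν := ⟨by rw [hνapply _ MeasurableSet.univ]; exact ENNReal.ofReal_lt_top⟩
  have hac : ν ≪ μ := by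
    refine Measure.AbsolutelyContinuous.mk fun A hA h0 => ?_
    rw [hνapply A hA, ENNReal.ofReal_eq_zero]
    have hae : (A.indicator (fun _ => (1:ℝ))) =ᵐ[μ] ((0 : ↥(solidSub hS)) : Ω → ℝ) := by
      filter_upwards [measure_eq_zero_iff_ae_notMem.1 h0] with ω hω
      simp [Set.indicator_apply, hω]
    have := g_ae_eq hmc hX hgq (ι A hA) 0 hae
    rw [this, map_zero]
  refine ⟨fun ω => (ν.rnDeriv μ ω).toReal,
    Measure.integrable_toReal_rnDeriv,
    fun ω => ENNReal.toReal_nonneg,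
    (Measure.measurable_rnDeriv ν μ).ennreal_toReal, ?_⟩
  intro A hA hmem
  have h1 : (fun ω => A.indicator (fun _ => (1:ℝ)) ω * (ν.rnDeriv μ ω).toReal)
      = A.indicator (fun ω => (ν.rnDeriv μ ω).toReal) := by
    funext ω
    by_cases h : ω ∈ A <;> simp [Set.indicator_apply, h]
  rw [h1, integral_indicator hA, Measure.setIntegral_toReal_rnDeriv hac A,
    measureReal_def, hνapply A hA, ENNReal.toReal_ofReal (hιpos A hA)]

theorem mem_simple (hS' : IsSolidSpace μ S) (hconst : ∀ c : ℝ, (fun _ => c) ∈ S)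
    (s : SimpleFunc Ω ℝ) : ⇑s ∈ S := by
  obtain ⟨C, hC⟩ := (s.map (fun x => |x|)).exists_forall_le
  refine hS'.solid _ s.stronglyMeasurable.aestronglyMeasurable
    (fun _ => C) (hconst C) (Filter.Eventually.of_forall fun ω => ?_)
  calc |s ω| ≤ C := by simpa using hC ω
  _ ≤ |C| := le_abs_self C

section WithZ

variable {Z : Ω → ℝ}

theorem integrable_bdd (hZi : Integrable Z μ) (hZnn : ∀ ω, 0 ≤ Z ω)
    {W : Ω → ℝ} {C : ℝ} (hWm : AEStronglyMeasurable W μ) (hC : ∀ ω, |W ω| ≤ C) :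
    Integrable (fun ω => W ω * Z ω) μ := by
  refine Integrable.mono (hZi.const_mul C) (hWm.mul hZi.1)
    (Filter.Eventually.of_forall fun ω => ?_)
  rw [norm_mul, norm_mul, Real.norm_eq_abs, Real.norm_eq_abs, Real.norm_eq_abs]
  calc |W ω| * |Z ω| ≤ C * |Z ω| := mul_le_mul_of_nonneg_right (hC ω) (abs_nonneg _)
  _ ≤ |C| * |Z ω| := mul_le_mul_of_nonneg_right (le_abs_self C) (abs_nonneg _)

theorem g_simple (hmc : IsMCOn μ S ψ) (hconst : ∀ c : ℝ, (fun _ => c) ∈ S)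
    (hX : X ∈ S)
    (hgq : ∀ (w : ↥(solidSub hS)) {t : ℝ}, 0 < t → g w ≤ qf ψ X t (w : Ω → ℝ))
    (hZi : Integrable Z μ) (hZnn : ∀ ω, 0 ≤ Z ω)
    (hind : ∀ (A : Set Ω), MeasurableSet A → ∀ (hmem : A.indicator (fun _ => (1:ℝ)) ∈ S),
      ∫ ω, A.indicator (fun _ => (1:ℝ)) ω * Z ω ∂μ = g ⟨A.indicator (fun _ => (1:ℝ)), hmem⟩) :
    ∀ (s : SimpleFunc Ω ℝ) (hs : ⇑s ∈ S), g ⟨⇑s, hs⟩ = ∫ ω, s ω * Z ω ∂μ := by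
  intro s
  induction s using SimpleFunc.induction with
  | const c hA =>
    rename_i A
    intro hs
    have hmem := mem_indf hS hconst hA
    have hcoe : ⇑(SimpleFunc.piecewise A hA (SimpleFunc.const Ω c) (SimpleFunc.const Ω 0))
        = fun ω => c * A.indicator (fun _ => (1:ℝ)) ω := by
      funext ω
      by_cases h : ω ∈ A <;>
        simp [SimpleFunc.piecewise_apply, Set.indicator_apply, h]
    have hel : (⟨_, hs⟩ : ↥(solidSub hS))
        = c • (⟨A.indicator (fun _ => (1:ℝ)), hmem⟩ : ↥(solidSub hS)) :=
      Subtype.ext hcoe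
    rw [hel, LinearMap.map_smul, smul_eq_mul, ← hind A hA hmem, ← integral_const_mul]
    refine integral_congr_ae (Filter.Eventually.of_forall fun ω => ?_)
    have hcω := congrFun hcoe ω
    dsimp only
    rw [hcω]
    ring
  | @add f q hdisj hf hq =>
    intro hs
    have hfs : ⇑f ∈ S := mem_simple hS hconst f
    have hqs : ⇑q ∈ S := mem_simple hS hconst q
    have hel : (⟨⇑(f+q), hs⟩ : ↥(solidSub hS))
        = (⟨⇑f, hfs⟩ : ↥(solidSub hS)) + ⟨⇑q, hqs⟩ :=
      Subtype.ext (SimpleFunc.coe_add f q)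
    obtain ⟨Cf, hCf⟩ := (f.map (fun x => |x|)).exists_forall_le
    obtain ⟨Cq, hCq⟩ := (q.map (fun x => |x|)).exists_forall_le
    have hif : Integrable (fun ω => f ω * Z ω) μ :=
      integrable_bdd hZi hZnn f.stronglyMeasurable.aestronglyMeasurable
        (fun ω => by simpa using hCf ω)
    have hiq : Integrable (fun ω => q ω * Z ω) μ :=
      integrable_bdd hZi hZnn q.stronglyMeasurable.aestronglyMeasurable
        (fun ω => by simpa using hCq ω)
    rw [hel, map_add, hf hfs, hq hqs, ← integral_add hif hiq]
    refine integral_congr_ae (Filter.Eventually.of_forall fun ω => ?_)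
    rw [SimpleFunc.coe_add]
    show f ω * Z ω + q ω * Z ω = (f ω + q ω) * Z ω
    ring

theorem g_bdd (hmc : IsMCOn μ S ψ) (hL : LebesgueOn μ S ψ)
    (hconst : ∀ c : ℝ, (fun _ => c) ∈ S) (hX : X ∈ S)
    (hgq : ∀ (w : ↥(solidSub hS)) {t : ℝ}, 0 < t → g w ≤ qf ψ X t (w : Ω → ℝ))
    (hZi : Integrable Z μ) (hZnn : ∀ ω, 0 ≤ Z ω)
    (hind : ∀ (A : Set Ω), MeasurableSet A → ∀ (hmem : A.indicator (fun _ => (1:ℝ)) ∈ S),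
      ∫ ω, A.indicator (fun _ => (1:ℝ)) ω * Z ω ∂μ = g ⟨A.indicator (fun _ => (1:ℝ)), hmem⟩)
    (Y : Ω → ℝ) (hY : Y ∈ S) (hsm : StronglyMeasurable Y) (C : ℝ)
    (hC : ∀ ω, |Y ω| ≤ C) :
    g ⟨Y, hY⟩ = ∫ ω, Y ω * Z ω ∂μ := by
  set C' := max C 0 with hC'def
  have hC' : ∀ ω, ‖Y ω‖ ≤ C' := fun ω => by
    rw [Real.norm_eq_abs]; exact (hC ω).trans (le_max_left _ _)
  set s : ℕ → SimpleFunc Ω ℝ := fun n => hsm.approxBounded C' n with hsdef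
  have hsb : ∀ n ω, |s n ω| ≤ C' := fun n ω => by
    have h := hsm.norm_approxBounded_le (le_max_right C 0) n ω
    simpa only [Real.norm_eq_abs] using h
  have hsS : ∀ n, ⇑(s n) ∈ S := fun n => mem_simple hS hconst (s n)
  have htend : ∀ ω, Tendsto (fun n => s n ω) atTop (𝓝 (Y ω)) := fun ω =>
    hsm.tendsto_approxBounded_of_norm_le (hC' ω)
  have h1 : Tendsto (fun n => g ⟨⇑(s n), hsS n⟩) atTop (𝓝 (g ⟨Y, hY⟩)) :=
    g_cont hmc hL hX hgq (fun n => ⟨⇑(s n), hsS n⟩) ⟨Y, hY⟩ (fun _ => C') (hconst C')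
      (fun n => Filter.Eventually.of_forall (hsb n))
      (Filter.Eventually.of_forall htend)
  have h2 : Tendsto (fun n => ∫ ω, s n ω * Z ω ∂μ) atTop (𝓝 (∫ ω, Y ω * Z ω ∂μ)) := by
    refine tendsto_integral_of_dominated_convergence (fun ω => C' * Z ω)
      (fun n => (s n).stronglyMeasurable.aestronglyMeasurable.mul hZi.1)
      (hZi.const_mul C')
      (fun n => Filter.Eventually.of_forall fun ω => ?_)
      (Filter.Eventually.of_forall fun ω => (htend ω).mul_const _)
    rw [norm_mul, Real.norm_eq_abs, Real.norm_eq_abs, abs_of_nonneg (hZnn ω)]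
    exact mul_le_mul_of_nonneg_right (hsb n ω) (hZnn ω)
  have he : (fun n => g ⟨⇑(s n), hsS n⟩) = fun n => ∫ ω, s n ω * Z ω ∂μ :=
    funext fun n => g_simple hmc hconst hX hgq hZi hZnn hind (s n) (hsS n)
  rw [he] at h1
  exact tendsto_nhds_unique h1 h2

theorem clamp_abs (y c : ℝ) (hc : 0 ≤ c) : |max (min y c) (-c)| = min |y| c := by
  rcases le_total 0 y with hy | hy
  · have h0 : 0 ≤ min y c := le_min hy hc
    rw [abs_of_nonneg hy, max_eq_left ((neg_nonpos.2 hc).trans h0), abs_of_nonneg h0]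
  · rw [abs_of_nonpos hy, min_eq_left (hy.trans hc)]
    have h2 : max y (-c) ≤ 0 := max_le hy (neg_nonpos.2 hc)
    rw [abs_of_nonpos h2, ← min_neg_neg, neg_neg]

theorem g_trunc (hmc : IsMCOn μ S ψ) (hL : LebesgueOn μ S ψ)
    (hconst : ∀ c : ℝ, (fun _ => c) ∈ S) (hX : X ∈ S)
    (hgq : ∀ (w : ↥(solidSub hS)) {t : ℝ}, 0 < t → g w ≤ qf ψ X t (w : Ω → ℝ))
    (hZi : Integrable Z μ) (hZnn : ∀ ω, 0 ≤ Z ω)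
    (hind : ∀ (A : Set Ω), MeasurableSet A → ∀ (hmem : A.indicator (fun _ => (1:ℝ)) ∈ S),
      ∫ ω, A.indicator (fun _ => (1:ℝ)) ω * Z ω ∂μ = g ⟨A.indicator (fun _ => (1:ℝ)), hmem⟩)
    (Y : Ω → ℝ) (hY : Y ∈ S) (hsm : StronglyMeasurable Y) :
    Integrable (fun ω => Y ω * Z ω) μ ∧ g ⟨Y, hY⟩ = ∫ ω, Y ω * Z ω ∂μ := by
  set T : ℕ → Ω → ℝ := fun n ω => max (min (Y ω) n) (-(n:ℝ)) with hTdef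
  have habs : ∀ n ω, |T n ω| = min |Y ω| n := fun n ω =>
    clamp_abs _ _ (Nat.cast_nonneg n)
  have hTsm : ∀ n, StronglyMeasurable (T n) := fun n =>
    ((hsm.measurable.min measurable_const).max measurable_const).stronglyMeasurable
  have hTleY : ∀ n ω, |T n ω| ≤ |Y ω| := fun n ω => by
    rw [habs]; exact min_le_left _ _
  have hTmem : ∀ n, T n ∈ S := fun n =>
    hS.solid _ (hTsm n).aestronglyMeasurable Y hY
      (Filter.Eventually.of_forall fun ω => hTleY n ω)
  have hTbd : ∀ n ω, |T n ω| ≤ (n : ℝ) := fun n ω => by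
    rw [habs]; exact min_le_right _ _
  have htendT : ∀ ω, Tendsto (fun n => T n ω) atTop (𝓝 (Y ω)) := by
    intro ω
    refine tendsto_atTop_of_eventually_const (i₀ := ⌈|Y ω|⌉₊) fun n hn => ?_
    have h1 : |Y ω| ≤ (n : ℝ) := (Nat.le_ceil _).trans (Nat.cast_le.2 hn)
    show max (min (Y ω) n) (-(n:ℝ)) = Y ω
    rw [min_eq_left ((le_abs_self _).trans h1),
      max_eq_left ((neg_le_neg h1).trans (neg_abs_le _))]
  have habsTsm : ∀ n, StronglyMeasurable fun ω => |T n ω| := fun n => by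
    simpa [Real.norm_eq_abs] using (hTsm n).norm
  have habsS : ∀ n, (fun ω => |T n ω|) ∈ S := fun n => mem_abs' hS (hTmem n)
  have hYabsS : (fun ω => |Y ω|) ∈ S := mem_abs' hS hY
  set Cb := g ⟨fun ω => |Y ω|, hYabsS⟩ with hCb
  have hTZint : ∀ n, Integrable (fun ω => T n ω * Z ω) μ := fun n =>
    integrable_bdd hZi hZnn (hTsm n).aestronglyMeasurable (hTbd n)
  have habsTZint : ∀ n, Integrable (fun ω => |T n ω| * Z ω) μ := fun n =>
    integrable_bdd hZi hZnn (habsTsm n).aestronglyMeasurable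
      (fun ω => by rw [abs_abs]; exact hTbd n ω)
  have hint_n : ∀ n, ∫ ω, |T n ω| * Z ω ∂μ = g ⟨fun ω => |T n ω|, habsS n⟩ := fun n =>
    (g_bdd hmc hL hconst hX hgq hZi hZnn hind _ (habsS n) (habsTsm n) n
      (fun ω => by rw [abs_abs]; exact hTbd n ω)).symm
  have hle : ∀ n, g ⟨fun ω => |T n ω|, habsS n⟩ ≤ Cb := fun n =>
    g_mono hmc hX hgq ⟨fun ω => |Y ω|, hYabsS⟩ ⟨fun ω => |T n ω|, habsS n⟩
      (Filter.Eventually.of_forall fun ω => hTleY n ω)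
  have hYZm : AEStronglyMeasurable (fun ω => Y ω * Z ω) μ :=
    hsm.aestronglyMeasurable.mul hZi.1
  have habsmul : ∀ n ω, |T n ω * Z ω| = |T n ω| * Z ω := fun n ω => by
    rw [abs_mul, abs_of_nonneg (hZnn ω)]
  have hYabsmul : ∀ ω, |Y ω * Z ω| = |Y ω| * Z ω := fun ω => by
    rw [abs_mul, abs_of_nonneg (hZnn ω)]
  have hYZint : Integrable (fun ω => Y ω * Z ω) μ := by
    refine ⟨hYZm, ?_⟩
    have key : ∫⁻ ω, ENNReal.ofReal (|Y ω * Z ω|) ∂μ ≤ ENNReal.ofReal Cb := by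
      have hmono : ∀ ω, Monotone fun n => ENNReal.ofReal (|T n ω * Z ω|) := by
        intro ω m n hmn
        refine ENNReal.ofReal_le_ofReal ?_
        rw [habsmul, habsmul, habs, habs]
        exact mul_le_mul_of_nonneg_right
          (min_le_min le_rfl (Nat.cast_le.2 hmn)) (hZnn ω)
      have hsup : ∀ ω, (⨆ n, ENNReal.ofReal (|T n ω * Z ω|))
          = ENNReal.ofReal (|Y ω * Z ω|) := by
        intro ω
        refine iSup_eq_of_tendsto (hmono ω) ?_
        exact ENNReal.tendsto_ofReal ((htendT ω).mul_const (Z ω)).abs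
      have hlsup : ∫⁻ ω, ENNReal.ofReal (|Y ω * Z ω|) ∂μ
          = ⨆ n, ∫⁻ ω, ENNReal.ofReal (|T n ω * Z ω|) ∂μ := by
        rw [← lintegral_iSup'
          (fun n => ((hTZint n).abs.aestronglyMeasurable.aemeasurable.ennreal_ofReal))
          (Filter.Eventually.of_forall hmono)]
        exact lintegral_congr_ae (Filter.Eventually.of_forall fun ω => (hsup ω).symm)
      rw [hlsup]
      refine iSup_le fun n => ?_
      have hi : Integrable (fun ω => |T n ω * Z ω|) μ := (hTZint n).abs
      rw [← ofReal_integral_eq_lintegral_ofReal hi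
        (Filter.Eventually.of_forall fun ω => abs_nonneg _)]
      refine ENNReal.ofReal_le_ofReal ?_
      calc ∫ ω, |T n ω * Z ω| ∂μ = ∫ ω, |T n ω| * Z ω ∂μ :=
            integral_congr_ae (Filter.Eventually.of_forall fun ω => habsmul n ω)
        _ = g ⟨fun ω => |T n ω|, habsS n⟩ := hint_n n
        _ ≤ Cb := hle n
    have h2 : ∫⁻ ω, (‖Y ω * Z ω‖₊ : ℝ≥0∞) ∂μ ≤ ENNReal.ofReal Cb := by
      refine le_trans (le_of_eq (lintegral_congr_ae
        (Filter.Eventually.of_forall fun ω => ?_))) key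
      dsimp only
      rw [← enorm_eq_nnnorm, ← ofReal_norm, Real.norm_eq_abs]
    exact lt_of_le_of_lt h2 ENNReal.ofReal_lt_top
  refine ⟨hYZint, ?_⟩
  have hboundint : Integrable (fun ω => |Y ω| * Z ω) μ :=
    hYZint.abs.congr (Filter.Eventually.of_forall fun ω => hYabsmul ω)
  have h2 : Tendsto (fun n => ∫ ω, T n ω * Z ω ∂μ) atTop (𝓝 (∫ ω, Y ω * Z ω ∂μ)) := by
    refine tendsto_integral_of_dominated_convergence (fun ω => |Y ω| * Z ω)
      (fun n => (hTsm n).aestronglyMeasurable.mul hZi.1) hboundint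
      (fun n => Filter.Eventually.of_forall fun ω => ?_)
      (Filter.Eventually.of_forall fun ω => (htendT ω).mul_const _)
    rw [Real.norm_eq_abs, habsmul]
    exact mul_le_mul_of_nonneg_right (hTleY n ω) (hZnn ω)
  have h1 : Tendsto (fun n => g ⟨T n, hTmem n⟩) atTop (𝓝 (g ⟨Y, hY⟩)) :=
    g_cont hmc hL hX hgq (fun n => ⟨T n, hTmem n⟩) ⟨Y, hY⟩ (fun ω => |Y ω|) hYabsS
      (fun n => Filter.Eventually.of_forall fun ω => hTleY n ω)
      (Filter.Eventually.of_forall htendT)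
  have he : (fun n => g ⟨T n, hTmem n⟩) = fun n => ∫ ω, T n ω * Z ω ∂μ :=
    funext fun n => g_bdd hmc hL hconst hX hgq hZi hZnn hind _ (hTmem n) (hTsm n) n (hTbd n)
  rw [he] at h1
  exact tendsto_nhds_unique h1 h2

theorem g_all (hmc : IsMCOn μ S ψ) (hL : LebesgueOn μ S ψ)
    (hconst : ∀ c : ℝ, (fun _ => c) ∈ S) (hX : X ∈ S)
    (hgq : ∀ (w : ↥(solidSub hS)) {t : ℝ}, 0 < t → g w ≤ qf ψ X t (w : Ω → ℝ))
    (hZi : Integrable Z μ) (hZnn : ∀ ω, 0 ≤ Z ω)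
    (hind : ∀ (A : Set Ω), MeasurableSet A → ∀ (hmem : A.indicator (fun _ => (1:ℝ)) ∈ S),
      ∫ ω, A.indicator (fun _ => (1:ℝ)) ω * Z ω ∂μ = g ⟨A.indicator (fun _ => (1:ℝ)), hmem⟩)
    (Y : Ω → ℝ) (hY : Y ∈ S) :
    Integrable (fun ω => Y ω * Z ω) μ ∧ g ⟨Y, hY⟩ = ∫ ω, Y ω * Z ω ∂μ := by
  have ham := hS.aesm Y hY
  set Y' := ham.mk Y with hY'def
  have hsm' : StronglyMeasurable Y' := ham.stronglyMeasurable_mk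
  have hae : Y =ᵐ[μ] Y' := ham.ae_eq_mk
  have hY' : Y' ∈ S := hS.solid Y' hsm'.aestronglyMeasurable Y hY
    (by filter_upwards [hae] with ω h; rw [h])
  obtain ⟨ht1, ht2⟩ := g_trunc hmc hL hconst hX hgq hZi hZnn hind Y' hY' hsm'
  have haemul : (fun ω => Y' ω * Z ω) =ᵐ[μ] fun ω => Y ω * Z ω := by
    filter_upwards [hae] with ω h; rw [h]
  refine ⟨ht1.congr haemul, ?_⟩
  have he1 : g ⟨Y, hY⟩ = g ⟨Y', hY'⟩ := g_ae_eq hmc hX hgq _ _ hae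
  rw [he1, ht2]
  exact integral_congr_ae haemul

end WithZ

end WithG

end Stmt7Aux

/-- a finite monotone convex function with the Lebesgue property on a
solid space `S` containing the constants admits a σ-additive subgradient everywhere:
for each `X ∈ S` there is `Z ∈ S~ₙ` with `𝔼[YZ] − ψ(Y) ≤ 𝔼[XZ] − ψ(X)` for all `Y ∈ S`. -/
theorem stmt7 (μ : Measure Ω) [IsProbabilityMeasure μ]
    (S : Set (Ω → ℝ)) (hS : IsSolidSpace μ S) (hconst : ∀ c : ℝ, (fun _ => c) ∈ S)
    (ψ : (Ω → ℝ) → ℝ) (hmc : IsMCOn μ S ψ) (hL : LebesgueOn μ S ψ) :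
    ∀ X ∈ S, ∃ Z : Ω → ℝ,
      (∀ W ∈ S, Integrable (fun ω => W ω * Z ω) μ) ∧
      ∀ Y ∈ S, (∫ ω, Y ω * Z ω ∂μ) - ψ Y ≤ (∫ ω, X ω * Z ω ∂μ) - ψ X := by
  intro X hX
  obtain ⟨g, hgq⟩ := exists_g hS hmc hX
  obtain ⟨Z, hZi, hZnn, hZm, hind⟩ := exists_density hmc hL hconst hX hgq
  have hall := fun Y hY =>
    g_all hmc hL hconst hX hgq hZi hZnn (fun A hA hmem => hind A hA hmem) Y hY
  refine ⟨Z, fun W hW => (hall W hW).1, ?_⟩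
  intro Y hY
  have h := g_sub_le hgq ⟨Y, hY⟩ ⟨X, hX⟩
  have harg : (fun ω => X ω + ((((⟨Y, hY⟩ : ↥(solidSub hS)) : Ω → ℝ)) ω
      - (((⟨X, hX⟩ : ↥(solidSub hS)) : Ω → ℝ)) ω)) = Y := by
    funext ω
    show X ω + (Y ω - X ω) = Y ω
    ring
  rw [harg] at h
  have hY2 := (hall Y hY).2
  have hX2 := (hall X hX).2
  linarith [h, hY2, hX2]

end MaxLebExt
end
end

section
/- Under the standing assumption, the gauge ‖·‖_φ̂ is order-continuous on M^φ̂_u: if (X_n) is a sequence with |X_n| ≤ |Y| a.s. for all n for some Y ∈ M^φ̂_u and X_n → 0 a.s., then ‖X_n‖_φ̂ → 0. -/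
open MeasureTheory Filter Topology
open scoped ENNReal

noncomputable section

namespace MaxLebExt

variable {Ω : Type*} [MeasurableSpace Ω]

variable {μ : Measure Ω} {φ₀ : (Ω → ℝ) → ℝ}

/-- bound from L^∞ membership -/
lemma memLinf_bound {X : Ω → ℝ} (hX : MemLinf μ X) :
    ∃ C : ℝ, 0 ≤ C ∧ ∀ᵐ ω ∂μ, |X ω| ≤ C := by
  have h1 : eLpNormEssSup X μ < ⊤ := by
    have := hX.2; rwa [eLpNorm_exponent_top] at this
  refine ⟨(eLpNormEssSup X μ).toReal, ENNReal.toReal_nonneg, ?_⟩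
  filter_upwards [ae_le_eLpNormEssSup (f := X) (μ := μ)] with ω hω
  have h2 := ENNReal.toReal_mono h1.ne hω
  simpa [Real.norm_eq_abs] using h2

lemma conj_nonneg (h : Standing μ φ₀) (Z : Ω → ℝ) : (0 : EReal) ≤ conj μ φ₀ Z := by
  have h2 := le_iSup
    (fun X : {X : Ω → ℝ // MemLinf μ X} =>
      (((∫ ω, X.1 ω * Z ω ∂μ) - φ₀ X.1 : ℝ) : EReal)) ⟨0, MemLp.zero⟩
  simpa [h.zero, conj] using h2

lemma exists_conj_eq (h : Standing μ φ₀) {Z : Ω → ℝ} (hZ : MemDom μ φ₀ Z) :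
    ∃ c : ℝ, 0 ≤ c ∧ conj μ φ₀ Z = (c : EReal) := by
  have h0 := conj_nonneg h Z
  have hb : conj μ φ₀ Z ≠ ⊥ := by
    intro hbot; rw [hbot] at h0; simp at h0
  refine ⟨(conj μ φ₀ Z).toReal, ?_, (EReal.coe_toReal hZ.2.ne hb).symm⟩
  have := EReal.coe_toReal hZ.2.ne hb
  rw [← this] at h0
  exact_mod_cast h0

lemma memDom_nonneg (h : Standing μ φ₀) {Z : Ω → ℝ} (hZ : MemDom μ φ₀ Z) :
    0 ≤ᵐ[μ] Z := by
  obtain ⟨hint, htop⟩ := hZ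
  obtain ⟨Z', hZ'm, hZZ'⟩ := hint.1
  set A := {ω | Z' ω < 0} with hA
  have hAmeas : MeasurableSet A := measurableSet_lt hZ'm.measurable measurable_const
  have hnp : Integrable (fun ω => max (-Z ω) 0) μ := hint.neg.pos_part
  set m := ∫ ω, max (-Z ω) 0 ∂μ with hm
  have hm0 : 0 ≤ m := integral_nonneg fun ω => le_max_right _ _
  have hkey : ∀ k : ℕ, ((k * m : ℝ) : EReal) ≤ conj μ φ₀ Z := by
    intro k
    set Xk : Ω → ℝ := fun ω => -(k : ℝ) * A.indicator (fun _ => (1 : ℝ)) ω with hXk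
    have hXkmeas : AEStronglyMeasurable Xk μ := by
      apply Measurable.aestronglyMeasurable
      exact measurable_const.mul ((measurable_const.indicator hAmeas))
    have hXkm : MemLinf μ Xk := by
      refine memLp_top_of_bound hXkmeas (k : ℝ) (ae_of_all _ fun ω => ?_)
      rw [Real.norm_eq_abs, hXk]
      by_cases hω : ω ∈ A
      · simp [Set.indicator_of_mem hω]
      · simp [Set.indicator_of_notMem hω]
    have hXk_le : Xk ≤ᵐ[μ] (0 : Ω → ℝ) := ae_of_all _ fun ω => by
      simp only [hXk, Pi.zero_apply]
      by_cases hω : ω ∈ A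
      · simp [Set.indicator_of_mem hω]
      · simp [Set.indicator_of_notMem hω]
    have hφ : φ₀ Xk ≤ 0 := by
      have := h.mc.mono Xk 0 hXkm MemLp.zero hXk_le
      rwa [h.zero] at this
    have hint2 : ∫ ω, Xk ω * Z ω ∂μ = k * m := by
      have hae : (fun ω => Xk ω * Z ω) =ᵐ[μ] (fun ω => (k : ℝ) * max (-Z ω) 0) := by
        filter_upwards [hZZ'] with ω hω
        by_cases hωA : ω ∈ A
        · have hz : Z ω < 0 := by rw [hω]; exact hωA
          simp only [hXk, Set.indicator_of_mem hωA]
          rw [max_eq_left (by linarith)]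
          ring
        · have hz : 0 ≤ Z ω := by rw [hω]; exact not_lt.1 hωA
          simp only [hXk, Set.indicator_of_notMem hωA]
          rw [max_eq_right (by linarith)]
          ring
      rw [integral_congr_ae hae, integral_const_mul]
    have hle := le_iSup
      (fun X' : {X : Ω → ℝ // MemLinf μ X} =>
        (((∫ ω, X'.1 ω * Z ω ∂μ) - φ₀ X'.1 : ℝ) : EReal)) ⟨Xk, hXkm⟩
    refine le_trans ?_ hle
    simp only [hint2]
    exact_mod_cast (by linarith : (k : ℝ) * m ≤ (k : ℝ) * m - φ₀ Xk)
  have hmz : m = 0 := by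
    by_contra hne
    have hmpos : 0 < m := lt_of_le_of_ne hm0 (Ne.symm hne)
    obtain ⟨c, hc0, hceq⟩ := exists_conj_eq h ⟨hint, htop⟩
    obtain ⟨k, hk⟩ := exists_nat_gt (c / m)
    have h1 := hkey k
    rw [hceq] at h1
    have h2 : (k : ℝ) * m ≤ c := by exact_mod_cast h1
    have h3 : c / m < k := hk
    have h4 : c < k * m := by
      rw [div_lt_iff₀ hmpos] at h3; linarith
    linarith
  have h5 := (integral_eq_zero_iff_of_nonneg_ae
    (ae_of_all _ fun ω => le_max_right _ _) hnp).1 hmz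
  filter_upwards [h5] with ω hω
  have h6 : max (-Z ω) 0 = 0 := hω
  have h7 : -Z ω ≤ 0 := by
    have := le_max_left (-Z ω) 0
    rw [h6] at this; exact this
  simpa using (by linarith : (0:ℝ) ≤ Z ω)

lemma coe_ennreal_sub_coe (a : ℝ≥0∞) (ha : a ≠ ⊤) (c : ℝ) :
    ((a : EReal) - (c : EReal)) = ((a.toReal - c : ℝ) : EReal) := by
  have h1 : ((a : EReal)) = ((a.toReal : ℝ) : EReal) := by
    rw [← EReal.toReal_coe_ennreal (x := a)]
    exact (EReal.coe_toReal (by simpa [EReal.coe_ennreal_eq_top_iff] using ha)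
      (EReal.coe_ennreal_ne_bot a)).symm
  rw [h1, ← EReal.coe_sub]

lemma eE_of_nonneg {f : Ω → ℝ} (hf : 0 ≤ᵐ[μ] f) :
    eE μ f = ((∫⁻ ω, ENNReal.ofReal (f ω) ∂μ : ℝ≥0∞) : EReal) := by
  have h0 : ∫⁻ ω, ENNReal.ofReal (-f ω) ∂μ = 0 := by
    rw [show (fun ω => ENNReal.ofReal (-f ω)) = fun ω => ENNReal.ofReal (-f ω) from rfl]
    rw [← lintegral_zero (μ := μ)]
    apply lintegral_congr_ae
    filter_upwards [hf] with ω hω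
    simp only [Pi.zero_apply] at hω
    simp [ENNReal.ofReal_eq_zero.2 (by linarith : -f ω ≤ 0)]
  rw [eE, h0]
  simp

lemma eE_of_integrable {f : Ω → ℝ} (hf : Integrable f μ) :
    eE μ f = ((∫ ω, f ω ∂μ : ℝ) : EReal) := by
  have hb : ∫⁻ ω, ‖f ω‖₊ ∂μ < ⊤ := hf.2
  have h1 : ∫⁻ ω, ENNReal.ofReal (f ω) ∂μ ≠ ⊤ := by
    refine (lt_of_le_of_lt (lintegral_mono fun ω => ?_) hb).ne
    rw [← enorm_eq_nnnorm, ← ofReal_norm, Real.norm_eq_abs]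
    exact ENNReal.ofReal_le_ofReal (le_abs_self _)
  have h2 : ∫⁻ ω, ENNReal.ofReal (-f ω) ∂μ ≠ ⊤ := by
    refine (lt_of_le_of_lt (lintegral_mono fun ω => ?_) hb).ne
    rw [← enorm_eq_nnnorm, ← ofReal_norm, Real.norm_eq_abs]
    exact ENNReal.ofReal_le_ofReal (neg_le_abs _)
  rw [eE, integral_eq_lintegral_pos_part_sub_lintegral_neg_part hf]
  have h3 : ((∫⁻ ω, ENNReal.ofReal (f ω) ∂μ : ℝ≥0∞) : EReal)
      = (((∫⁻ ω, ENNReal.ofReal (f ω) ∂μ).toReal : ℝ) : EReal) := by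
    rw [← EReal.toReal_coe_ennreal (x := _)]
    exact (EReal.coe_toReal (by simpa [EReal.coe_ennreal_eq_top_iff] using h1)
      (EReal.coe_ennreal_ne_bot _)).symm
  have h4 : ((∫⁻ ω, ENNReal.ofReal (-f ω) ∂μ : ℝ≥0∞) : EReal)
      = (((∫⁻ ω, ENNReal.ofReal (-f ω) ∂μ).toReal : ℝ) : EReal) := by
    rw [← EReal.toReal_coe_ennreal (x := _)]
    exact (EReal.coe_toReal (by simpa [EReal.coe_ennreal_eq_top_iff] using h2)
      (EReal.coe_ennreal_ne_bot _)).symm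
  rw [h3, h4, ← EReal.coe_sub]

lemma hatphi_le_phi_s9 (h : Standing μ φ₀) {X : Ω → ℝ} (hX : MemLinf μ X) :
    hatphi μ φ₀ X ≤ ((φ₀ X : ℝ) : EReal) := by
  apply iSup_le
  rintro ⟨Z, hZ⟩
  obtain ⟨c, hc0, hceq⟩ := exists_conj_eq h hZ
  obtain ⟨C, hC0, hCb⟩ := memLinf_bound hX
  have hint : Integrable (fun ω => X ω * Z ω) μ := by
    refine hZ.1.bdd_mul (c := C) hX.1 ?_
    filter_upwards [hCb] with ω hω
    rwa [Real.norm_eq_abs]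
  rw [eE_of_integrable hint, hceq]
  have hle : ((∫ ω, X ω * Z ω ∂μ) - φ₀ X : ℝ) ≤ c := by
    have h2 : ((((∫ ω, X ω * Z ω ∂μ) - φ₀ X : ℝ)) : EReal) ≤ conj μ φ₀ Z := le_iSup
      (fun X' : {X : Ω → ℝ // MemLinf μ X} =>
        (((∫ ω, X'.1 ω * Z ω ∂μ) - φ₀ X'.1 : ℝ) : EReal)) ⟨X, hX⟩
    rw [hceq] at h2
    exact_mod_cast h2
  rw [← EReal.coe_sub]
  exact_mod_cast (by linarith : (∫ ω, X ω * Z ω ∂μ) - c ≤ φ₀ X)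





lemma hatphi_le_one (h : Standing μ φ₀) (G T B : Ω → ℝ)
    (hTm : AEMeasurable T μ)
    (hGnn : ∀ ω, 0 ≤ G ω) (hTnn : ∀ ω, 0 ≤ T ω) (hBnn : ∀ ω, 0 ≤ B ω)
    (hT1 : hatphi μ φ₀ T ≤ 1) (hB1 : hatphi μ φ₀ B ≤ 1)
    (hptw : ∀ᵐ ω ∂μ, G ω ≤ (1/2) * T ω + (1/2) * B ω) :
    hatphi μ φ₀ G ≤ 1 := by
  apply iSup_le
  rintro ⟨Z, hZ⟩
  obtain ⟨c, hc0, hceq⟩ := exists_conj_eq h hZ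
  have hZnn := memDom_nonneg h hZ
  set u := ∫⁻ ω, ENNReal.ofReal (T ω * Z ω) ∂μ with hu
  set v := ∫⁻ ω, ENNReal.ofReal (B ω * Z ω) ∂μ with hv
  set w := ∫⁻ ω, ENNReal.ofReal (G ω * Z ω) ∂μ with hw
  have hprod : ∀ F : Ω → ℝ, (∀ ω, 0 ≤ F ω) →
      (0 : Ω → ℝ) ≤ᵐ[μ] fun ω => F ω * Z ω := by
    intro F hF
    filter_upwards [hZnn] with ω hω
    simp only [Pi.zero_apply] at hω ⊢
    exact mul_nonneg (hF ω) hω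
  have hterm : ∀ F : Ω → ℝ, (∀ ω, 0 ≤ F ω) → hatphi μ φ₀ F ≤ 1 →
      ∫⁻ ω, ENNReal.ofReal (F ω * Z ω) ∂μ ≠ ⊤ ∧
      (∫⁻ ω, ENNReal.ofReal (F ω * Z ω) ∂μ).toReal - c ≤ 1 := by
    intro F hF hF1
    have h2 : eE μ (fun ω => F ω * Z ω) - conj μ φ₀ Z ≤ hatphi μ φ₀ F :=
      le_iSup (fun Z' : {Z : Ω → ℝ // MemDom μ φ₀ Z} =>
        eE μ (fun ω => F ω * Z'.1 ω) - conj μ φ₀ Z'.1) ⟨Z, hZ⟩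
    rw [eE_of_nonneg (hprod F hF), hceq] at h2
    have h3 := h2.trans hF1
    have hne : ∫⁻ ω, ENNReal.ofReal (F ω * Z ω) ∂μ ≠ ⊤ := by
      intro htop
      rw [htop, EReal.coe_ennreal_top, EReal.top_sub_coe, ← EReal.coe_one,
        top_le_iff] at h3
      exact EReal.coe_ne_top 1 h3
    refine ⟨hne, ?_⟩
    rw [coe_ennreal_sub_coe _ hne c, ← EReal.coe_one] at h3
    exact_mod_cast h3
  obtain ⟨hune, huR⟩ := hterm T hTnn hT1
  obtain ⟨hvne, hvR⟩ := hterm B hBnn hB1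
  have hmeasT : AEMeasurable (fun ω => ENNReal.ofReal ((1/2) * (T ω * Z ω))) μ := by
    apply ENNReal.measurable_ofReal.comp_aemeasurable
    exact aemeasurable_const.mul (hTm.mul hZ.1.1.aemeasurable)
  have hwle : w ≤ ENNReal.ofReal (1/2) * u + ENNReal.ofReal (1/2) * v := by
    have step1 : w ≤ ∫⁻ ω, (ENNReal.ofReal ((1/2) * (T ω * Z ω))
        + ENNReal.ofReal ((1/2) * (B ω * Z ω))) ∂μ := by
      apply lintegral_mono_ae
      filter_upwards [hptw, hZnn] with ω h1 h2
      simp only [Pi.zero_apply] at h2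
      calc ENNReal.ofReal (G ω * Z ω)
          ≤ ENNReal.ofReal ((1/2) * (T ω * Z ω) + (1/2) * (B ω * Z ω)) := by
            apply ENNReal.ofReal_le_ofReal
            nlinarith [mul_le_mul_of_nonneg_right h1 h2]
        _ ≤ _ := ENNReal.ofReal_add_le
    rw [lintegral_add_left' hmeasT] at step1
    refine step1.trans (le_of_eq ?_)
    congr 1
    · rw [show (fun ω => ENNReal.ofReal ((1/2) * (T ω * Z ω)))
          = fun ω => ENNReal.ofReal (1/2) * ENNReal.ofReal (T ω * Z ω) from
          funext fun ω => ENNReal.ofReal_mul (by norm_num),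
        lintegral_const_mul' _ _ ENNReal.ofReal_ne_top]
    · rw [show (fun ω => ENNReal.ofReal ((1/2) * (B ω * Z ω)))
          = fun ω => ENNReal.ofReal (1/2) * ENNReal.ofReal (B ω * Z ω) from
          funext fun ω => ENNReal.ofReal_mul (by norm_num),
        lintegral_const_mul' _ _ ENNReal.ofReal_ne_top]
  have hsumne : ENNReal.ofReal (1/2) * u + ENNReal.ofReal (1/2) * v ≠ ⊤ :=
    ENNReal.add_ne_top.2 ⟨ENNReal.mul_ne_top ENNReal.ofReal_ne_top hune,
      ENNReal.mul_ne_top ENNReal.ofReal_ne_top hvne⟩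
  have hwne : w ≠ ⊤ := by
    intro htop
    rw [htop] at hwle
    exact hsumne (top_le_iff.1 hwle)
  have hwR : w.toReal ≤ (1/2) * u.toReal + (1/2) * v.toReal := by
    have h6 := ENNReal.toReal_mono hsumne hwle
    rwa [ENNReal.toReal_add (ENNReal.mul_ne_top ENNReal.ofReal_ne_top hune)
      (ENNReal.mul_ne_top ENNReal.ofReal_ne_top hvne),
      ENNReal.toReal_mul, ENNReal.toReal_mul,
      ENNReal.toReal_ofReal (by norm_num : (0:ℝ) ≤ 1/2)] at h6
  rw [eE_of_nonneg (hprod G hGnn), hceq, coe_ennreal_sub_coe _ hwne c, ← EReal.coe_one]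
  exact_mod_cast (by linarith : w.toReal - c ≤ 1)

lemma gauge_nonneg (W : Ω → ℝ) : (0 : EReal) ≤ gauge μ φ₀ W := by
  apply le_sInf
  rintro l ⟨r, hr, rfl, -⟩
  exact_mod_cast hr.le


/-- the gauge `‖·‖_φ̂` is order-continuous on `M^φ̂_u`: if `|X_n| ≤ |Y|`
a.s. for all `n` with `Y ∈ M^φ̂_u` and `X_n → 0` a.s., then `‖X_n‖_φ̂ → 0`. -/
theorem stmt9 (μ : Measure Ω) [IsProbabilityMeasure μ]
    (φ₀ : (Ω → ℝ) → ℝ) (h : Standing μ φ₀)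
    (X : ℕ → Ω → ℝ) (Y : Ω → ℝ) (hY : MemMu μ φ₀ Y)
    (hmeas : ∀ n, AEStronglyMeasurable (X n) μ)
    (hdom : ∀ n, ∀ᵐ ω ∂μ, |X n ω| ≤ |Y ω|)
    (hconv : ∀ᵐ ω ∂μ, Tendsto (fun n => X n ω) atTop (𝓝 (0 : ℝ))) :
    Tendsto (fun n => gauge μ φ₀ (X n)) atTop (𝓝 (0 : EReal)) := by
  rw [tendsto_order]
  constructor
  · intro a ha
    exact Eventually.of_forall fun n => lt_of_lt_of_le ha (gauge_nonneg (X n))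
  intro a ha
  obtain ⟨r, hr0, hra⟩ := EReal.exists_between_coe_real ha
  have hrpos : (0 : ℝ) < r := by exact_mod_cast hr0
  have h2r : (0 : ℝ) < 2 * r⁻¹ := by positivity
  have h01 : (0 : EReal) < 1 := by exact_mod_cast zero_lt_one
  obtain ⟨N, hN⟩ := ((hY.2 (2 * r⁻¹) h2r).eventually_lt_const h01).exists
  have hT1 : hatphi μ φ₀ (tailFn Y (2 * r⁻¹) N) ≤ 1 := hN.le
  set B : ℕ → Ω → ℝ := fun n ω => 2 * r⁻¹ * min |X n ω| (N : ℝ) with hB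
  have hBbd : ∀ n ω, |B n ω| ≤ 2 * r⁻¹ * (N : ℝ) := by
    intro n ω
    have hm0 : 0 ≤ min |X n ω| (N : ℝ) := le_min (abs_nonneg _) (Nat.cast_nonneg N)
    rw [hB, abs_of_nonneg (by positivity)]
    have := min_le_right |X n ω| (N : ℝ)
    nlinarith
  have hBm : ∀ n, MemLinf μ (B n) := by
    intro n
    refine memLp_top_of_bound ?_ (2 * r⁻¹ * (N : ℝ))
      (ae_of_all _ fun ω => by rw [Real.norm_eq_abs]; exact hBbd n ω)
    have h1 : AEStronglyMeasurable (fun ω => |X n ω|) μ := by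
      have := (hmeas n).norm
      simpa [Real.norm_eq_abs] using this
    exact ((h1.aemeasurable.min aemeasurable_const).const_mul _).aestronglyMeasurable
  have hBleb : Tendsto (fun n => φ₀ (B n)) atTop (𝓝 (φ₀ 0)) := by
    refine h.leb B 0 hBm MemLp.zero ⟨2 * r⁻¹ * (N : ℝ), fun n => ae_of_all _ (hBbd n)⟩ ?_
    filter_upwards [hconv] with ω hω
    have h1 : Tendsto (fun n => |X n ω|) atTop (𝓝 (0 : ℝ)) := by
      simpa using hω.abs
    have h2 := h1.min (tendsto_const_nhds (x := (N : ℝ)))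
    rw [min_eq_left (Nat.cast_nonneg N)] at h2
    have h3 := h2.const_mul (2 * r⁻¹)
    simpa using h3
  rw [h.zero] at hBleb
  have hBev : ∀ᶠ n in atTop, φ₀ (B n) < 1 := hBleb.eventually_lt_const one_pos
  filter_upwards [hBev] with n hn
  have hTm : AEMeasurable (tailFn Y (2 * r⁻¹) N) μ := by
    obtain ⟨Y', hY'm, hYY'⟩ := hY.1
    refine ⟨Set.indicator {ω | (N : ℝ) < ‖Y' ω‖} (fun ω => 2 * r⁻¹ * ‖Y' ω‖), ?_, ?_⟩
    · exact (measurable_const.mul hY'm.measurable.norm).indicator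
        (measurableSet_lt measurable_const hY'm.measurable.norm)
    · filter_upwards [hYY'] with ω hω
      simp only [tailFn, Set.indicator_apply, Set.mem_setOf_eq, Real.norm_eq_abs, hω]
  have hkey : hatphi μ φ₀ (fun ω => |X n ω| / r) ≤ 1 := by
    refine hatphi_le_one h _ (tailFn Y (2 * r⁻¹) N) (B n) hTm
      (fun ω => div_nonneg (abs_nonneg _) hrpos.le)
      (fun ω => Set.indicator_nonneg (fun ω' _ => by positivity) ω)
      (fun ω => mul_nonneg h2r.le (le_min (abs_nonneg _) (Nat.cast_nonneg N)))
      hT1 ?_ ?_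
    · refine (hatphi_le_phi_s9 h (hBm n)).trans ?_
      rw [← EReal.coe_one]
      exact_mod_cast hn.le
    · filter_upwards [hdom n] with ω hω
      simp only [tailFn, Set.indicator_apply, Set.mem_setOf_eq, hB]
      by_cases hc : (N : ℝ) < |Y ω|
      · rw [if_pos hc]
        have hm0 : 0 ≤ min |X n ω| (N : ℝ) := le_min (abs_nonneg _) (Nat.cast_nonneg N)
        rw [div_eq_mul_inv]
        have h5 := mul_le_mul_of_nonneg_left hω (inv_pos.2 hrpos).le
        nlinarith [(inv_pos.2 hrpos).le]
      · rw [if_neg hc]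
        have hYN : |Y ω| ≤ (N : ℝ) := not_lt.1 hc
        have hXN : |X n ω| ≤ (N : ℝ) := hω.trans hYN
        rw [min_eq_left hXN, div_eq_mul_inv]
        nlinarith [(inv_pos.2 hrpos).le]
  have hmem : (r : EReal) ∈ {l : EReal | ∃ r' : ℝ, 0 < r' ∧ l = (r' : EReal) ∧
      hatphi μ φ₀ (fun ω => |X n ω| / r') ≤ 1} := ⟨r, hrpos, rfl, hkey⟩
  exact lt_of_le_of_lt (sInf_le hmem) hra

end MaxLebExt
end
end
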